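/- arXiv:2004.02197 — 5 statements merged into one kernel-verified Lean document; each statement's English description precedes it below -/
import Mathlib

section
/- Let n ≥ 5 and let g be an integer with 2 ≤ g ≤ n−3. In the path-star tree P_{n−g,g}, for every path vertex i with 1 ≤ i ≤ n−g, the number of subtrees of P_{n−g,g} containing i equals f(i) = i·(n−g−i) + i·2^g. -/
open scoped Classical

noncomputable section

namespace TreeCenters

variable {V : Type*}

/-- The number of subtrees of `G` (nonempty vertex sets inducing a connected
subgraph) containing the vertex `v`. -/
def subtreeCount (G : SimpleGraph V) (v : V) : ℕ :=
  Nat.card {S : Finset V // v ∈ S ∧ (G.induce (S : Set V)).Connected}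

/-- The subtree core: the set of vertices maximizing the number of subtrees
containing them. -/
def subtreeCore (G : SimpleGraph V) : Set V :=
  {v | ∀ u, subtreeCount G u ≤ subtreeCount G v}

/-- The eccentricity of a vertex. -/
def eccent (G : SimpleGraph V) (v : V) : ℕ :=
  sSup (Set.range fun u => G.dist v u)

/-- The center: the set of vertices of minimum eccentricity. -/
def center (G : SimpleGraph V) : Set V :=
  {v | ∀ u, eccent G v ≤ eccent G u}

/-- The weight of a vertex `v`: the maximum number of vertices of a connected
component of `G - v`. -/
def weight (G : SimpleGraph V) (v : V) : ℕ :=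
  sSup (Set.range fun c : (G.induce {u | u ≠ v}).ConnectedComponent => Nat.card c.supp)

/-- The centroid: the set of vertices of minimum weight. -/
def centroid (G : SimpleGraph V) : Set V :=
  {v | ∀ u, weight G v ≤ weight G u}

/-- The set of (real) eigenvalues of the Laplacian matrix of `G`. -/
def lapEigenvalues [Fintype V] [DecidableEq V] (G : SimpleGraph V) : Set ℝ :=
  {t | ∃ Y : V → ℝ, Y ≠ 0 ∧ (G.lapMatrix ℝ).mulVec Y = t • Y}

/-- The algebraic connectivity: the second smallest eigenvalue of the
Laplacian matrix of `G`. -/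
def algConn [Fintype V] [DecidableEq V] (G : SimpleGraph V) : ℝ :=
  sInf (lapEigenvalues G \ {sInf (lapEigenvalues G)})

/-- A Fiedler vector: an eigenvector of the Laplacian corresponding to the
algebraic connectivity. -/
def IsFiedler [Fintype V] [DecidableEq V] (G : SimpleGraph V) (Y : V → ℝ) : Prop :=
  Y ≠ 0 ∧ (G.lapMatrix ℝ).mulVec Y = algConn G • Y

/-- The characteristic set of `G`, regarded as a set of vertices: it consists of
the characteristic vertices together with the endpoints of characteristic edges. -/
def charSet [Fintype V] [DecidableEq V] (G : SimpleGraph V) : Set V :=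
  {v | ∃ Y : V → ℝ, IsFiedler G Y ∧
    ((Y v = 0 ∧ ∃ u, G.Adj u v ∧ Y u ≠ 0) ∨ (∃ u, G.Adj u v ∧ Y u * Y v < 0))}

/-- The distance between two sets of vertices: the minimum of the pairwise
distances. -/
def setDist (G : SimpleGraph V) (A B : Set V) : ℕ :=
  sInf {d | ∃ a ∈ A, ∃ b ∈ B, d = G.dist a b}

/-- The diameter of a graph: the maximum distance between two vertices. -/
def graphDiam (G : SimpleGraph V) : ℕ :=
  sSup (Set.range fun p : V × V => G.dist p.1 p.2)

/-- The path-star tree `P_{n-g,g}`: the path `1 - 2 - ⋯ - (n-g)` (here `0`-indexed,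
so the vertex with label `i` is the index `i - 1`) with `g` pendant vertices
(indices `n-g, …, n-1`) attached to the vertex with label `n - g` (index `n-g-1`). -/
def pathStar (n g : ℕ) : SimpleGraph (Fin n) :=
  SimpleGraph.fromRel fun i j =>
    (i.val + 1 = j.val ∧ j.val < n - g) ∨ (i.val = n - g - 1 ∧ n - g ≤ j.val)

/-- The tree `T_{n,k}`: the path `[v_1, …, v_{k+1}]` (vertex `v_i` has index `i - 1`)
with `n - k - 1` pendant vertices (indices `k+1, …, n-1`) attached to the vertex
`v_{⌊(k+2)/2⌋}` (index `⌊(k+2)/2⌋ - 1 = ⌊k/2⌋`). -/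
def Tnk (n k : ℕ) : SimpleGraph (Fin n) :=
  SimpleGraph.fromRel fun i j =>
    (i.val + 1 = j.val ∧ j.val ≤ k) ∨ (i.val = k / 2 ∧ k + 1 ≤ j.val)

/-- The tree `T(l,m,k)` on `n = l + m + k` vertices: the path `[v_1, …, v_k]`
(vertex `v_i` has index `i - 1`) with `l` pendant vertices (indices `k, …, k+l-1`)
attached to `v_1` and `m` pendant vertices (indices `k+l, …, n-1`) attached to `v_k`. -/
def Tlmk (n l m k : ℕ) : SimpleGraph (Fin n) :=
  SimpleGraph.fromRel fun i j =>
    (i.val + 1 = j.val ∧ j.val < k) ∨ (i.val = 0 ∧ k ≤ j.val ∧ j.val < k + l) ∨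
      (i.val = k - 1 ∧ k + l ≤ j.val)

/-- `g₀` is the smallest positive integer such that `2 ^ g₀ + 1 > n - g₀`. -/
def IsMinimalG0 (n g₀ : ℕ) : Prop :=
  0 < g₀ ∧ n - g₀ < 2 ^ g₀ + 1 ∧ ∀ g, 0 < g → n - g < 2 ^ g + 1 → g₀ ≤ g

/-- `δ_n(C, C_d)`: the maximum over all trees on `n` vertices of the distance
between the center and the centroid. -/
def deltaCCd (n : ℕ) : ℕ :=
  sSup {d | ∃ G : SimpleGraph (Fin n), G.IsTree ∧ d = setDist G (center G) (centroid G)}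

/-- `δ_n(C, S_c)`: the maximum over all trees on `n` vertices of the distance
between the center and the subtree core. -/
def deltaCSc (n : ℕ) : ℕ :=
  sSup {d | ∃ G : SimpleGraph (Fin n), G.IsTree ∧ d = setDist G (center G) (subtreeCore G)}

/-- `δ_n(C_d, S_c)`: the maximum over all trees on `n` vertices of the distance
between the centroid and the subtree core. -/
def deltaCdSc (n : ℕ) : ℕ :=
  sSup {d | ∃ G : SimpleGraph (Fin n), G.IsTree ∧ d = setDist G (centroid G) (subtreeCore G)}

/-- `δ_n(χ, S_c)`: the maximum over all trees on `n` vertices of the distance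
between the characteristic set and the subtree core. -/
def deltaChiSc (n : ℕ) : ℕ :=
  sSup {d | ∃ G : SimpleGraph (Fin n), G.IsTree ∧ d = setDist G (charSet G) (subtreeCore G)}


lemma pathStar_adj_elim {n g : ℕ} {u w : Fin n} (h : (pathStar n g).Adj u w) :
    (u.val + 1 = w.val ∧ w.val < n - g) ∨ (w.val + 1 = u.val ∧ u.val < n - g) ∨
    (u.val = n - g - 1 ∧ n - g ≤ w.val) ∨ (w.val = n - g - 1 ∧ n - g ≤ u.val) := by
  rw [pathStar, SimpleGraph.fromRel_adj] at h
  tauto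


lemma pathStar_adj_succ {n g j : ℕ} (hj : j + 1 < n) (hjm : j + 1 < n - g) :
    (pathStar n g).Adj ⟨j, by omega⟩ ⟨j + 1, hj⟩ := by
  rw [pathStar, SimpleGraph.fromRel_adj]
  refine ⟨fun hh => ?_, Or.inl (Or.inl ⟨rfl, hjm⟩)⟩
  have := congrArg Fin.val hh
  simp at this


lemma pathStar_adj_leaf {n g l : ℕ} (hl : l < n) (hml : n - g ≤ l) (h1 : 1 ≤ n - g) :
    (pathStar n g).Adj ⟨n - g - 1, by omega⟩ ⟨l, hl⟩ := by
  rw [pathStar, SimpleGraph.fromRel_adj]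
  refine ⟨fun hh => ?_, Or.inl (Or.inr ⟨rfl, hml⟩)⟩
  have := congrArg Fin.val hh
  simp at this
  omega


lemma walk_side {V : Type*} {G : SimpleGraph V} {s : Set V} (P : V → Prop) (y : V)
    (hy : y ∉ s)
    (hadj : ∀ u w : V, G.Adj u w → u ≠ y → w ≠ y → (P u ↔ P w)) :
    ∀ {x z : s}, (G.induce s).Walk x z → (P x.1 ↔ P z.1) := by
  intro x z w
  induction w with
  | nil => rfl
  | @cons a b c h q ih =>
    have hab : G.Adj a.1 b.1 := by simpa using h
    have ha : (a : V) ≠ y := fun hh => hy (hh ▸ a.2)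
    have hb : (b : V) ≠ y := fun hh => hy (hh ▸ b.2)
    exact (hadj _ _ hab ha hb).trans ih


lemma connected_struct {n g : ℕ} (a b : ℕ) (hgn : g + 1 ≤ n)
    (hab : a ≤ b) (hb : b < n - g) (S : Finset (Fin n))
    (hmem : ∀ y : Fin n, y ∈ S → (a ≤ y.val ∧ y.val ≤ b) ∨ (n - g ≤ y.val ∧ b = n - g - 1))
    (hint : ∀ j (h : j < n), a ≤ j → j ≤ b → (⟨j, h⟩ : Fin n) ∈ S) :
    ((pathStar n g).induce (↑S : Set (Fin n))).Connected := by
  have han : a < n := by omega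
  have hbn : b < n := by omega
  have base : ((⟨a, han⟩ : Fin n) : Fin n) ∈ (↑S : Set (Fin n)) := by
    simpa using hint a han le_rfl hab
  -- reachability within the interval
  have key : ∀ j, ∀ (hj : j < n) (h1 : a ≤ j) (h2 : j ≤ b),
      ((pathStar n g).induce (↑S : Set (Fin n))).Reachable
        ⟨⟨j, hj⟩, by simpa using hint j hj h1 h2⟩ ⟨⟨a, han⟩, base⟩ := by
    intro j
    induction j with
    | zero =>
      intro hj h1 h2
      have : a = 0 := by omega
      subst this
      rfl
    | succ j ih =>
      intro hj h1 h2
      rcases Nat.eq_or_lt_of_le h1 with he | hlt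
      · -- a = j + 1
        have : (⟨⟨j + 1, hj⟩, by simpa using hint _ hj h1 h2⟩ :
            (↑S : Set (Fin n))) = ⟨⟨a, han⟩, base⟩ := by
          ext; simp [← he]
        rw [this]
      · have hr := ih (by omega) (by omega) (by omega)
        refine (SimpleGraph.Adj.reachable ?_).symm.trans hr
        show ((pathStar n g).induce (↑S : Set (Fin n))).Adj
          ⟨⟨j, by omega⟩, by simpa using hint j (by omega) (by omega) (by omega)⟩
          ⟨⟨j + 1, hj⟩, by simpa using hint _ hj h1 h2⟩
        simpa using pathStar_adj_succ hj (by omega)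
  have hne : Nonempty (↑(↑S : Set (Fin n))) := ⟨⟨⟨a, han⟩, base⟩⟩
  refine SimpleGraph.Connected.mk ?_
  intro x z
  have main : ∀ x : (↑S : Set (Fin n)),
      ((pathStar n g).induce (↑S : Set (Fin n))).Reachable x ⟨⟨a, han⟩, base⟩ := by
    rintro ⟨y, hy⟩
    have hyS : y ∈ S := by simpa using hy
    rcases hmem y hyS with ⟨h1, h2⟩ | ⟨h1, h2⟩
    · have : (⟨y, hy⟩ : (↑S : Set (Fin n))) =
          ⟨⟨y.val, y.isLt⟩, by simpa using hint y.val y.isLt h1 h2⟩ := by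
        ext; rfl
      rw [this]
      exact key y.val y.isLt h1 h2
    · -- y is a leaf, go through the hub
      subst h2
      have hhub : (⟨n - g - 1, by omega⟩ : Fin n) ∈ S :=
        hint (n - g - 1) (by omega) (by omega) le_rfl
      have hadj : ((pathStar n g).induce (↑S : Set (Fin n))).Adj
          ⟨⟨n - g - 1, by omega⟩, by simpa using hhub⟩ ⟨y, hy⟩ := by
        have := pathStar_adj_leaf y.isLt h1 (by omega)
        simpa using this
      refine (hadj.symm.reachable).trans ?_
      exact key (n - g - 1) (by omega) (by omega) le_rfl
  exact (main x).trans (main z).symm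

lemma struct_of_connected {n g : ℕ} (hgn : g + 1 ≤ n)
    (S : Finset (Fin n)) (p : ℕ) (hp : p < n - g)
    (hv : (⟨p, by omega⟩ : Fin n) ∈ S)
    (hconn : ((pathStar n g).induce (↑S : Set (Fin n))).Connected) :
    ∃ a b, a ≤ p ∧ p ≤ b ∧ b < n - g ∧
      (∀ y ∈ S, y.val < n - g → a ≤ y.val ∧ y.val ≤ b) ∧
      (∀ j (h : j < n), a ≤ j → j ≤ b → (⟨j, h⟩ : Fin n) ∈ S) ∧
      ((∃ y ∈ S, n - g ≤ y.val) → b = n - g - 1) := by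
  set T : Finset ℕ := (S.filter fun x => x.val < n - g).image Fin.val with hT
  have hpT : p ∈ T := by
    simp only [hT, Finset.mem_image, Finset.mem_filter]
    exact ⟨⟨p, by omega⟩, ⟨hv, hp⟩, rfl⟩
  have hTne : T.Nonempty := ⟨p, hpT⟩
  set a := T.min' hTne with ha
  set b := T.max' hTne with hb
  have hmemT : ∀ j ∈ T, ∃ (h : j < n), (⟨j, h⟩ : Fin n) ∈ S ∧ j < n - g := by
    intro j hj
    simp only [hT, Finset.mem_image, Finset.mem_filter] at hj
    obtain ⟨x, ⟨hx1, hx2⟩, hx3⟩ := hj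
    refine ⟨by omega, ?_, by omega⟩
    have : x = ⟨j, by omega⟩ := Fin.ext hx3
    rwa [this] at hx1
  have hap : a ≤ p := T.min'_le p hpT
  have hpb : p ≤ b := T.le_max' p hpT
  obtain ⟨han, haS, ham⟩ := hmemT a (T.min'_mem hTne)
  obtain ⟨hbn, hbS, hbm⟩ := hmemT b (T.max'_mem hTne)
  have hbound : ∀ y ∈ S, y.val < n - g → a ≤ y.val ∧ y.val ≤ b := by
    intro y hy hym
    have : y.val ∈ T := by
      simp only [hT, Finset.mem_image, Finset.mem_filter]
      exact ⟨y, ⟨hy, hym⟩, rfl⟩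
    exact ⟨T.min'_le _ this, T.le_max' _ this⟩
  have hint : ∀ j (h : j < n), a ≤ j → j ≤ b → (⟨j, h⟩ : Fin n) ∈ S := by
    intro j hjn h1 h2
    by_contra hjS
    have hjT : j ∉ T := by
      intro hj
      obtain ⟨h', hS', _⟩ := hmemT j hj
      exact hjS hS'
    have haj : a < j := lt_of_le_of_ne h1 (fun hh => hjT (hh ▸ T.min'_mem hTne))
    have hjb : j < b := lt_of_le_of_ne h2 (fun hh => hjT (hh ▸ T.max'_mem hTne))
    obtain ⟨w⟩ := hconn.preconnected ⟨⟨a, han⟩, by simpa using haS⟩ ⟨⟨b, hbn⟩, by simpa using hbS⟩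
    have hside := walk_side (G := pathStar n g) (fun u => u.val < j) ⟨j, hjn⟩
      (by simpa using hjS) ?_ w
    · simp only at hside
      omega
    · intro u w' hadj hu hw
      have hu' : u.val ≠ j := fun hh => hu (Fin.ext hh)
      have hw' : w'.val ≠ j := fun hh => hw (Fin.ext hh)
      rcases pathStar_adj_elim hadj with ⟨h1, h2⟩ | ⟨h1, h2⟩ | ⟨h1, h2⟩ | ⟨h1, h2⟩ <;>
        constructor <;> intro <;> omega
  refine ⟨a, b, hap, hpb, hbm, hbound, hint, ?_⟩
  rintro ⟨y, hyS, hym⟩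
  -- y is a leaf; its neighbor on any walk to p is the hub
  have hyp : (⟨y, by simpa using hyS⟩ : (↑S : Set (Fin n))) ≠
      ⟨⟨p, by omega⟩, by simpa using hv⟩ := by
    intro hh
    have := congrArg (fun x : (↑S : Set (Fin n)) => (x.1 : ℕ)) hh
    simp at this
    omega
  obtain ⟨w⟩ := hconn.preconnected ⟨y, by simpa using hyS⟩ ⟨⟨p, by omega⟩, by simpa using hv⟩
  have hnotnil : ¬ w.Nil := SimpleGraph.Walk.not_nil_of_ne hyp
  set u := w.getVert 1 with hu
  have hadj' : (SimpleGraph.induce (↑S) (pathStar n g)).Adj _ (w.getVert 1) := w.adj_snd hnotnil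
  rw [← hu] at hadj'
  have hadj : (pathStar n g).Adj y u.1 := by simpa using hadj'
  have huval : (u.1).val = n - g - 1 := by
    rcases pathStar_adj_elim hadj with ⟨h1, h2⟩ | ⟨h1, h2⟩ | ⟨h1, h2⟩ | ⟨h1, h2⟩ <;> omega
  have huT : (n - g - 1) ∈ T := by
    simp only [hT, Finset.mem_image, Finset.mem_filter]
    exact ⟨u.1, ⟨by simpa using u.2, by omega⟩, huval⟩
  have := T.le_max' _ huT
  omega

/-- In the path-star tree `P_{n-g,g}`, for every path vertex with
label `i`, `1 ≤ i ≤ n-g` (index `i - 1`), the number of subtrees containing it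
equals `i * (n - g - i) + i * 2 ^ g`. -/
theorem pathStar_subtreeCount (n g : ℕ) (hn : 5 ≤ n) (hg2 : 2 ≤ g) (hg3 : g ≤ n - 3)
    (i : ℕ) (hi1 : 1 ≤ i) (hi2 : i ≤ n - g) :
    subtreeCount (pathStar n g) ⟨i - 1, by omega⟩ = i * (n - g - i) + i * 2 ^ g := by
  classical
  have hm3 : 3 ≤ n - g := by omega
  have hmg : (n - g) + g = n := by omega
  set m := n - g with hmdef
  set v : Fin n := ⟨i - 1, by omega⟩ with hv
  -- the parametrization
  set F : Fin i × (Fin (m - i) ⊕ Finset (Fin g)) → Finset (Fin n) := fun p =>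
    match p.2 with
    | Sum.inl j => Finset.univ.filter fun y : Fin n => p.1.val ≤ y.val ∧ y.val ≤ i - 1 + j.val
    | Sum.inr L => Finset.univ.filter fun y : Fin n =>
        (p.1.val ≤ y.val ∧ y.val ≤ m - 1) ∨
        (m ≤ y.val ∧ ∃ t ∈ L, y.val = m + t.val) with hF
  have hmemF : ∀ p, v ∈ F p := by
    rintro ⟨a, j | L⟩ <;>
      simp only [hF, Finset.mem_filter, Finset.mem_univ, true_and, hv]
    · have := a.isLt
      omega
    · have := a.isLt
      exact Or.inl ⟨by omega, by omega⟩
  have hconnF : ∀ p, ((pathStar n g).induce (↑(F p) : Set (Fin n))).Connected := by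
    rintro ⟨a, j | L⟩
    · have hj := j.isLt
      have ha := a.isLt
      refine connected_struct a.val (i - 1 + j.val) (by omega) (by omega) (by omega) _ ?_ ?_
      · intro y hy
        simp only [hF, Finset.mem_filter] at hy
        exact Or.inl hy.2
      · intro k hk h1 h2
        simp only [hF, Finset.mem_filter, Finset.mem_univ, true_and]
        exact ⟨h1, h2⟩
    · have ha := a.isLt
      refine connected_struct a.val (m - 1) (by omega) (by omega) (by omega) _ ?_ ?_
      · intro y hy
        simp only [hF, Finset.mem_filter] at hy
        rcases hy.2 with h | h
        · exact Or.inl h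
        · exact Or.inr ⟨h.1, rfl⟩
      · intro k hk h1 h2
        simp only [hF, Finset.mem_filter, Finset.mem_univ, true_and]
        exact Or.inl ⟨h1, h2⟩
  -- the bijection
  let f : Fin i × (Fin (m - i) ⊕ Finset (Fin g)) →
      {S : Finset (Fin n) // v ∈ S ∧ ((pathStar n g).induce (↑S : Set (Fin n))).Connected} :=
    fun p => ⟨F p, hmemF p, hconnF p⟩
  have hmin : ∀ (a : Fin i) (x) (k : ℕ) (hk : k < n),
      (⟨k, hk⟩ : Fin n) ∈ F (a, x) → a.val ≤ k := by
    rintro a (j | L) k hk hmem <;>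
      simp only [hF, Finset.mem_filter, Finset.mem_univ, true_and] at hmem
    · exact hmem.1
    · have ha := a.isLt
      rcases hmem with ⟨h1, _⟩ | ⟨h1, _⟩
      · exact h1
      · omega
  have hself : ∀ (a : Fin i) (x), (⟨a.val, by omega⟩ : Fin n) ∈ F (a, x) := by
    rintro a (j | L) <;>
      simp only [hF, Finset.mem_filter, Finset.mem_univ, true_and]
    · have ha := a.isLt
      exact ⟨le_rfl, by omega⟩
    · have ha := a.isLt
      exact Or.inl ⟨le_rfl, by omega⟩
  have hinj : Function.Injective f := by
    rintro ⟨a, x⟩ ⟨a', x'⟩ h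
    have hFe : F (a, x) = F (a', x') := congrArg Subtype.val h
    have hext := Finset.ext_iff.mp hFe
    have ha := a.isLt; have ha' := a'.isLt
    have hmema : ∀ (k : ℕ) (hk : k < n),
        (⟨k, hk⟩ : Fin n) ∈ F (a, x) ↔ (⟨k, hk⟩ : Fin n) ∈ F (a', x') :=
      fun k hk => hext ⟨k, hk⟩
    have haa' : a = a' := by
      apply Fin.ext
      refine le_antisymm ?_ ?_
      · exact hmin a x a'.val (by omega) ((hmema a'.val (by omega)).mpr (hself a' x'))
      · exact hmin a' x' a.val (by omega) ((hmema a.val (by omega)).mp (hself a x))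
    subst haa'
    obtain j | L := x <;> obtain j' | L' := x'
    · have hj := j.isLt; have hj' := j'.isLt
      have h1 := hmema (i - 1 + j.val) (by omega)
      have h2 := hmema (i - 1 + j'.val) (by omega)
      simp only [hF, Finset.mem_filter, Finset.mem_univ, true_and] at h1 h2
      have : j = j' := by
        apply Fin.ext
        have e1 := h1.mp ⟨by omega, le_rfl⟩
        have e2 := h2.mpr ⟨by omega, le_rfl⟩
        omega
      rw [this]
    · exfalso
      have hj := j.isLt
      have h1 := hmema (m - 1) (by omega)
      simp only [hF, Finset.mem_filter, Finset.mem_univ, true_and] at h1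
      have := h1.mpr (Or.inl ⟨by omega, le_rfl⟩)
      omega
    · exfalso
      have hj' := j'.isLt
      have h1 := hmema (m - 1) (by omega)
      simp only [hF, Finset.mem_filter, Finset.mem_univ, true_and] at h1
      have := h1.mp (Or.inl ⟨by omega, le_rfl⟩)
      omega
    · have hLL : L = L' := by
        ext t
        have ht := t.isLt
        have h1 := hmema (m + t.val) (by omega)
        simp only [hF, Finset.mem_filter, Finset.mem_univ, true_and] at h1
        constructor
        · intro htL
          have := h1.mp (Or.inr ⟨by omega, t, htL, rfl⟩)
          rcases this with hc | ⟨_, t', ht', he⟩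
          · omega
          · have : t' = t := by apply Fin.ext; omega
            rwa [this] at ht'
        · intro htL
          have := h1.mpr (Or.inr ⟨by omega, t, htL, rfl⟩)
          rcases this with hc | ⟨_, t', ht', he⟩
          · omega
          · have : t' = t := by apply Fin.ext; omega
            rwa [this] at ht'
      rw [hLL]
  have hsurj : Function.Surjective f := by
    rintro ⟨S, hvS, hSconn⟩
    obtain ⟨a, b, hap, hpb, hbm, hbound, hint, hleaf⟩ :=
      struct_of_connected (by omega) S (i - 1) (by omega) hvS hSconn
    have hai : a < i := by omega
    by_cases hb : b = m - 1
    · -- use inr with the leaf set of S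
      refine ⟨(⟨a, hai⟩, Sum.inr (Finset.univ.filter
        fun t : Fin g => (⟨m + t.val, by omega⟩ : Fin n) ∈ S)), ?_⟩
      apply Subtype.ext
      show F (⟨a, hai⟩, Sum.inr (Finset.univ.filter
        fun t : Fin g => (⟨m + t.val, by omega⟩ : Fin n) ∈ S)) = S
      ext y
      simp only [hF, Finset.mem_filter, Finset.mem_univ, true_and]
      constructor
      · rintro (⟨h1, h2⟩ | ⟨h1, t, ht, he⟩)
        · exact hint y.val y.isLt h1 (by omega)
        · have : y = ⟨m + t.val, by omega⟩ := Fin.ext he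
          rw [this]
          exact ht
      · intro hy
        by_cases hym : y.val < m
        · obtain ⟨h1, h2⟩ := hbound y hy hym
          exact Or.inl ⟨h1, by omega⟩
        · push_neg at hym
          have hyn := y.isLt
          have hy' : (⟨m + (y.val - m), by omega⟩ : Fin n) ∈ S := by
            have : (⟨m + (y.val - m), by omega⟩ : Fin n) = y :=
              Fin.ext (show m + (y.val - m) = y.val by omega)
            rw [this]
            exact hy
          refine Or.inr ⟨hym, ⟨y.val - m, by omega⟩, hy', ?_⟩
          show y.val = m + (y.val - m)
          omega
    · -- b ≤ m - 2 : no leaves, use inl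
      have hb2 : b ≤ m - 2 := by
        have : b < m := hbm
        omega
      have hnoleaf : ∀ y ∈ S, y.val < m := by
        intro y hy
        by_contra hc
        push_neg at hc
        exact hb (hleaf ⟨y, hy, hc⟩)
      refine ⟨(⟨a, hai⟩, Sum.inl ⟨b - (i - 1), by omega⟩), ?_⟩
      apply Subtype.ext
      show F (⟨a, hai⟩, Sum.inl ⟨b - (i - 1), by omega⟩) = S
      ext y
      simp only [hF, Finset.mem_filter, Finset.mem_univ, true_and]
      constructor
      · rintro ⟨h1, h2⟩
        exact hint y.val y.isLt h1 (by omega)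
      · intro hy
        obtain ⟨h1, h2⟩ := hbound y hy (hnoleaf y hy)
        exact ⟨h1, by omega⟩
  rw [subtreeCount]
  rw [Nat.card_congr (Equiv.ofBijective f ⟨hinj, hsurj⟩).symm]
  simp only [Nat.card_eq_fintype_card, Fintype.card_prod, Fintype.card_sum, Fintype.card_fin,
    Fintype.card_finset]
  rw [Nat.mul_add]

end TreeCenters

end
end

section
/- Let n ≥ 5 and let g₀ be the smallest positive integer such that 2^{g₀} + 1 > n − g₀. Then for every integer k with 1 ≤ k ≤ g₀−2, the subtree core of the path-star tree P_{n−g₀+k, g₀−k} contains a path vertex of label at most n−g₀; that is, there exists α ≥ 0 such that the vertex n−g₀−α belongs to S_c(P_{n−g₀+k, g₀−k}). -/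
open scoped Classical

noncomputable section

namespace TreeCenters

variable {V : Type*}

lemma crossing {W : Type*} {G : SimpleGraph W} {u v : W} (w : G.Walk u v) (P : W → Prop)
    (hu : P u) (hv : ¬ P v) : ∃ a b, G.Adj a b ∧ P a ∧ ¬ P b := by
  induction w with
  | nil => exact absurd hu hv
  | @cons x y z h p ih =>
    by_cases hy : P y
    · exact ih hy hv
    · exact ⟨x, y, h, hu, hy⟩

lemma pathStar_adj {n g m : ℕ} (hm : n - g = m) {i j : Fin n} :
    (pathStar n g).Adj i j ↔ i ≠ j ∧
      ((i.val + 1 = j.val ∧ j.val < m) ∨ (i.val = m - 1 ∧ m ≤ j.val) ∨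
       (j.val + 1 = i.val ∧ i.val < m) ∨ (j.val = m - 1 ∧ m ≤ i.val)) := by
  subst hm
  rw [pathStar, SimpleGraph.fromRel_adj]
  tauto

lemma induce_adj' {n : ℕ} {G : SimpleGraph (Fin n)} {s : Set (Fin n)} {u v : s} :
    (G.induce s).Adj u v ↔ G.Adj (u : Fin n) (v : Fin n) := by
  simp [SimpleGraph.comap_adj]

/-- The good (connected) finsets of `pathStar`. -/
def IsGood (n m : ℕ) (S : Finset (Fin n)) : Prop :=
  (∃ p : Fin n, m ≤ p.val ∧ S = {p}) ∨
  (∃ a b : ℕ, a ≤ b ∧ b < m ∧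
    (∀ i : Fin n, i.val < m → (i ∈ S ↔ a ≤ i.val ∧ i.val ≤ b)) ∧
    (∀ i ∈ S, m ≤ i.val → b = m - 1))

lemma conn_of_good {n g m : ℕ} (hm : n - g = m) (hm1 : 1 ≤ m) (hmn : m ≤ n)
    {S : Finset (Fin n)} (hS : IsGood n m S) :
    ((pathStar n g).induce (S : Set (Fin n))).Connected := by
  rw [SimpleGraph.connected_iff_exists_forall_reachable]
  rcases hS with ⟨p, _, rfl⟩ | ⟨a, b, hab, hbm, hiff, hpend⟩
  · refine ⟨⟨p, by simp⟩, ?_⟩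
    intro w
    have hw : (w : Fin n) = p := by simpa using w.2
    have : w = (⟨p, by simp⟩ : ((({p} : Finset (Fin n)) : Set (Fin n)))) := Subtype.ext hw
    rw [this]
  · have hbn : b < n := lt_of_lt_of_le hbm hmn
    set xb : Fin n := ⟨b, hbn⟩ with hxb
    have hxbv : xb.val = b := rfl
    have hxbS : xb ∈ S := (hiff xb (by omega)).2 ⟨by omega, by omega⟩
    refine ⟨⟨xb, by simpa using hxbS⟩, ?_⟩
    have key : ∀ d : ℕ, ∀ z : Fin n, ∀ hz : z ∈ (S : Set (Fin n)), z.val < m → b - z.val ≤ d →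
        ((pathStar n g).induce (S : Set (Fin n))).Reachable ⟨z, hz⟩ ⟨xb, by simpa using hxbS⟩ := by
      intro d
      induction d with
      | zero =>
        intro z hz hzm hd
        have hzb : z.val ≤ b := ((hiff z hzm).1 (by simpa using hz)).2
        have : z = xb := Fin.ext (by omega)
        subst this
        exact SimpleGraph.Reachable.refl _
      | succ d ih =>
        intro z hz hzm hd
        by_cases hzb : z.val = b
        · have : z = xb := Fin.ext (by omega)
          subst this
          exact SimpleGraph.Reachable.refl _
        · have hzS : z ∈ S := by simpa using hz
          have hzb' : z.val < b := lt_of_le_of_ne ((hiff z hzm).1 hzS).2 hzb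
          have ha : a ≤ z.val := ((hiff z hzm).1 hzS).1
          have hz1n : z.val + 1 < n := by omega
          set z' : Fin n := ⟨z.val + 1, hz1n⟩ with hz'
          have hz'v : z'.val = z.val + 1 := rfl
          have hz'S : z' ∈ S := (hiff z' (by omega)).2 ⟨by omega, by omega⟩
          have hadj : ((pathStar n g).induce (S : Set (Fin n))).Adj ⟨z, hz⟩ ⟨z', by simpa using hz'S⟩ := by
            rw [induce_adj', pathStar_adj hm]
            refine ⟨?_, Or.inl ⟨hz'v.symm, show z'.val < m by omega⟩⟩
            intro h
            have : z.val = z'.val := congrArg Fin.val h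
            omega
          have hle : b - z'.val ≤ d := by omega
          have hlt : z'.val < m := by omega
          exact (hadj.reachable).trans (ih z' (by simpa using hz'S) hlt hle)
    intro w
    rcases lt_or_ge (w : Fin n).val m with hwm | hwm
    · exact (key (b - (w : Fin n).val) (w : Fin n) w.2 hwm le_rfl).symm
    · have hb : b = m - 1 := hpend (w : Fin n) (by simpa using w.2) hwm
      have hadj : ((pathStar n g).induce (S : Set (Fin n))).Adj w ⟨xb, by simpa using hxbS⟩ := by
        rw [induce_adj', pathStar_adj hm]
        refine ⟨?_, Or.inr (Or.inr (Or.inr ⟨show xb.val = m - 1 by omega, hwm⟩))⟩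
        intro h
        have : (w : Fin n).val = xb.val := congrArg Fin.val h
        omega
      exact hadj.reachable.symm

/-- extract a crossing edge of `pathStar` from reachability in the induced graph -/
lemma crossing' {n g m : ℕ} (hm : n - g = m) {S : Finset (Fin n)}
    (hc : ((pathStar n g).induce (S : Set (Fin n))).Preconnected
    ) {x y : Fin n} (hx : x ∈ S) (hy : y ∈ S) (P : Fin n → Prop)
    (hPx : P x) (hPy : ¬ P y) :
    ∃ α β : Fin n, α ∈ S ∧ β ∈ S ∧ P α ∧ ¬ P β ∧ α ≠ β ∧
      ((α.val + 1 = β.val ∧ β.val < m) ∨ (α.val = m - 1 ∧ m ≤ β.val) ∨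
       (β.val + 1 = α.val ∧ α.val < m) ∨ (β.val = m - 1 ∧ m ≤ α.val)) := by
  have hr := hc ⟨x, by simpa using hx⟩ ⟨y, by simpa using hy⟩
  refine hr.elim (fun w => ?_)
  obtain ⟨a, b, hab, hPa, hPb⟩ := crossing w (fun z => P (z : Fin n)) hPx hPy
  rw [induce_adj', pathStar_adj hm] at hab
  exact ⟨a, b, by simpa using a.2, by simpa using b.2, hPa, hPb,
    fun h => hab.1 h, hab.2⟩

lemma good_of_conn {n g m : ℕ} (hm : n - g = m) (hm1 : 1 ≤ m) (hmn : m ≤ n)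
    {S : Finset (Fin n)} (hc : ((pathStar n g).induce (S : Set (Fin n))).Connected) :
    IsGood n m S := by
  obtain ⟨x0⟩ := hc.nonempty
  have hx0 : (x0 : Fin n) ∈ S := by simpa using x0.2
  by_cases hpath : ∃ x ∈ S, x.val < m
  · -- there is a path vertex: second case
    right
    set A : Finset ℕ := (S.filter (fun i => i.val < m)).image Fin.val with hA
    have hAne : A.Nonempty := by
      obtain ⟨x, hxS, hxm⟩ := hpath
      exact ⟨x.val, by simp [hA]; exact ⟨x, ⟨hxS, hxm⟩, rfl⟩⟩
    set a := A.min' hAne with ha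
    set b := A.max' hAne with hb
    have hmem : ∀ c ∈ A, ∃ x : Fin n, x ∈ S ∧ x.val = c ∧ c < m := by
      intro c hcA
      simp only [hA, Finset.mem_image, Finset.mem_filter] at hcA
      obtain ⟨x, ⟨hxS, hxm⟩, rfl⟩ := hcA
      exact ⟨x, hxS, rfl, hxm⟩
    obtain ⟨xa, hxaS, hxav, ham⟩ := hmem a (A.min'_mem hAne)
    obtain ⟨xb, hxbS, hxbv, hbm⟩ := hmem b (A.max'_mem hAne)
    have hinA : ∀ i : Fin n, i ∈ S → i.val < m → a ≤ i.val ∧ i.val ≤ b := by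
      intro i hiS him
      have : i.val ∈ A := by simp [hA]; exact ⟨i, ⟨hiS, him⟩, rfl⟩
      exact ⟨A.min'_le _ this, A.le_max' _ this⟩
    have hab' : a ≤ b := by have := hinA xa hxaS (by omega); omega
    refine ⟨a, b, hab', hbm, ?_, ?_⟩
    · intro i him
      constructor
      · intro hiS; exact hinA i hiS him
      · rintro ⟨hai, hib⟩
        by_contra hiS
        have hia : i.val ≠ a := fun h => hiS (by rw [show i = xa from Fin.ext (by omega)]; exact hxaS)
        have hib' : i.val ≠ b := fun h => hiS (by rw [show i = xb from Fin.ext (by omega)]; exact hxbS)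
        obtain ⟨α, β, hαS, hβS, hPα, hPβ, hne, hd⟩ :=
          crossing' hm hc.preconnected hxaS hxbS (fun z => z.val < i.val) (by omega) (by omega)
        push_neg at hPβ
        rcases hd with ⟨h1, h2⟩ | ⟨h1, h2⟩ | ⟨h1, h2⟩ | ⟨h1, h2⟩
        · exact hiS (by rw [show i = β from Fin.ext (by omega)]; exact hβS)
        · omega
        · omega
        · omega
    · intro p hpS hpm
      obtain ⟨α, β, hαS, hβS, hPα, hPβ, hne, hd⟩ :=
        crossing' hm hc.preconnected hxbS hpS (fun z => z.val < m) (by omega) (by omega)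
      push_neg at hPβ
      have hαA : α.val ∈ A := by simp [hA]; exact ⟨α, ⟨hαS, hPα⟩, rfl⟩
      have hαb : α.val ≤ b := A.le_max' _ hαA
      rcases hd with ⟨h1, h2⟩ | ⟨h1, h2⟩ | ⟨h1, h2⟩ | ⟨h1, h2⟩
      · omega
      · omega
      · omega
      · -- β.val = m - 1 ∧ m ≤ α.val : contradiction with hPα
        omega
  · -- no path vertex: singleton pendant
    push_neg at hpath
    left
    refine ⟨x0, hpath _ hx0, ?_⟩
    have : ∀ y ∈ S, y = (x0 : Fin n) := by
      intro y hyS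
      by_contra hne
      obtain ⟨α, β, hαS, hβS, hPα, hPβ, hne', hd⟩ :=
        crossing' hm hc.preconnected hx0 hyS (fun z => z = (x0 : Fin n)) rfl hne
      have hαm : m ≤ α.val := hpath _ hαS
      have hβm : m ≤ β.val := hpath _ hβS
      rcases hd with ⟨h1, h2⟩ | ⟨h1, h2⟩ | ⟨h1, h2⟩ | ⟨h1, h2⟩ <;> omega
    apply Finset.eq_singleton_iff_unique_mem.2 ⟨hx0, this⟩
lemma conn_iff_good {n g m : ℕ} (hm : n - g = m) (hm1 : 1 ≤ m) (hmn : m ≤ n)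
    {S : Finset (Fin n)} :
    ((pathStar n g).induce (S : Set (Fin n))).Connected ↔ IsGood n m S :=
  ⟨good_of_conn hm hm1 hmn, conn_of_good hm hm1 hmn⟩

/-- interval finset -/
def Ifin (n a b : ℕ) : Finset (Fin n) :=
  Finset.univ.filter (fun i => a ≤ i.val ∧ i.val ≤ b)
/-- pendant finset -/
def Pend (n m : ℕ) : Finset (Fin n) :=
  Finset.univ.filter (fun i => m ≤ i.val)

lemma mem_Ifin {n a b : ℕ} {i : Fin n} : i ∈ Ifin n a b ↔ a ≤ i.val ∧ i.val ≤ b := by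
  simp [Ifin]
lemma mem_Pend {n m : ℕ} {i : Fin n} : i ∈ Pend n m ↔ m ≤ i.val := by simp [Pend]

lemma card_Pend {n m g : ℕ} (hn : n = m + g) : (Pend n m).card = g := by
  subst hn
  have himg : Pend (m+g) m =
      Finset.image (fun j : Fin g => (⟨m + j.val, by omega⟩ : Fin (m+g))) Finset.univ := by
    apply Finset.ext
    intro i
    rw [mem_Pend, Finset.mem_image]
    constructor
    · intro hi
      refine ⟨⟨i.val - m, by omega⟩, Finset.mem_univ _, Fin.ext ?_⟩
      simp only [Fin.val_mk]
      omega
    · rintro ⟨j, -, rfl⟩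
      simp only [Fin.val_mk]
      omega
  rw [himg, Finset.card_image_of_injective _ ?_, Finset.card_univ, Fintype.card_fin]
  intro j1 j2 h
  have := congrArg Fin.val h
  simp only [Fin.val_mk] at this
  exact Fin.ext (by omega)

lemma count_path {n g m : ℕ} (hm : n - g = m) (hn : n = m + g) (hm2 : 2 ≤ m)
    (v : Fin n) (hv : v.val < m) :
    (Finset.univ.filter (fun S : Finset (Fin n) =>
        v ∈ S ∧ ((pathStar n g).induce (S : Set (Fin n))).Connected)).card
      = (v.val + 1) * ((m - 1 - v.val) + 2 ^ g) := by
  have hm1 : 1 ≤ m := by omega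
  have hmn : m ≤ n := by omega
  set F1 : Finset (Finset (Fin n)) :=
    ((Finset.range (v.val+1)) ×ˢ (Finset.Icc v.val (m-2))).image (fun p => Ifin n p.1 p.2) with hF1
  set F2 : Finset (Finset (Fin n)) :=
    ((Finset.range (v.val+1)) ×ˢ (Pend n m).powerset).image
      (fun p => (Ifin n p.1 (m-1)) ∪ p.2) with hF2
  have hset : (Finset.univ.filter (fun S : Finset (Fin n) =>
      v ∈ S ∧ ((pathStar n g).induce (S : Set (Fin n))).Connected)) = F1 ∪ F2 := by
    apply Finset.ext
    intro S
    rw [Finset.mem_filter, Finset.mem_union, conn_iff_good hm hm1 hmn]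
    constructor
    · rintro ⟨-, hvS, hgood⟩
      rcases hgood with ⟨p, hpm, rfl⟩ | ⟨a, b, hab, hbm, hiff, hpend⟩
      · have : v = p := by simpa using hvS
        omega
      · have hav : a ≤ v.val ∧ v.val ≤ b := (hiff v hv).1 hvS
        by_cases hbb : b = m - 1
        · right
          rw [hF2, Finset.mem_image]
          refine ⟨(a, S.filter (fun i => m ≤ i.val)), ?_, ?_⟩
          · rw [Finset.mem_product, Finset.mem_range, Finset.mem_powerset]
            exact ⟨by omega, fun i hi => mem_Pend.2 (Finset.mem_filter.1 hi).2⟩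
          · show Ifin n a (m-1) ∪ S.filter (fun i => m ≤ i.val) = S
            apply Finset.ext
            intro i
            rw [Finset.mem_union, mem_Ifin, Finset.mem_filter]
            rcases lt_or_ge i.val m with him | him
            · rw [hiff i him]
              constructor
              · rintro (⟨h1, h2⟩ | ⟨h1, h2⟩) <;> [exact ⟨h1, by omega⟩; omega]
              · rintro ⟨h1, h2⟩; exact Or.inl ⟨h1, by omega⟩
            · constructor
              · rintro (⟨h1, h2⟩ | ⟨h1, h2⟩) <;> [omega; exact h1]
              · intro hiS; exact Or.inr ⟨hiS, him⟩
        · left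
          have hb2 : b ≤ m - 2 := by omega
          have hnop : ∀ i ∈ S, i.val < m := by
            intro i hiS
            by_contra hbig
            exact hbb (hpend i hiS (by omega))
          rw [hF1, Finset.mem_image]
          refine ⟨(a, b), ?_, ?_⟩
          · rw [Finset.mem_product, Finset.mem_range, Finset.mem_Icc]
            exact ⟨by omega, by omega⟩
          · show Ifin n a b = S
            apply Finset.ext
            intro i
            rw [mem_Ifin]
            rcases lt_or_ge i.val m with him | him
            · exact ((hiff i him).symm)
            · constructor
              · rintro ⟨h1, h2⟩; omega
              · intro hiS; exact absurd (hnop i hiS) (by omega)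
    · intro h
      have : v ∈ S ∧ IsGood n m S := by
        rcases h with h | h
        · rw [hF1, Finset.mem_image] at h
          obtain ⟨⟨a, b⟩, hmemp, rfl⟩ := h
          rw [Finset.mem_product, Finset.mem_range, Finset.mem_Icc] at hmemp
          obtain ⟨ha, hb1, hb2⟩ := hmemp
          refine ⟨mem_Ifin.2 ⟨by omega, by omega⟩, Or.inr ⟨a, b, by omega, by omega, ?_, ?_⟩⟩
          · intro i him
            rw [mem_Ifin]
          · intro i hi him
            rw [mem_Ifin] at hi
            omega
        · rw [hF2, Finset.mem_image] at h
          obtain ⟨⟨a, P⟩, hmemp, rfl⟩ := h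
          rw [Finset.mem_product, Finset.mem_range, Finset.mem_powerset] at hmemp
          obtain ⟨ha, hP⟩ := hmemp
          refine ⟨Finset.mem_union_left _ (mem_Ifin.2 ⟨by omega, by omega⟩),
            Or.inr ⟨a, m-1, by omega, by omega, ?_, ?_⟩⟩
          · intro i him
            rw [Finset.mem_union, mem_Ifin]
            constructor
            · rintro (⟨h1, h2⟩ | hP')
              · exact ⟨h1, h2⟩
              · have := mem_Pend.1 (hP hP'); omega
            · rintro ⟨h1, h2⟩; exact Or.inl ⟨h1, h2⟩
          · intro i hi him; rfl
      exact ⟨Finset.mem_univ _, this.1, this.2⟩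
  rw [hset]
  have hdisj : Disjoint F1 F2 := by
    rw [Finset.disjoint_left]
    intro S hS1 hS2
    have hxm1 : (⟨m-1, by omega⟩ : Fin n) ∉ S := by
      rw [hF1, Finset.mem_image] at hS1
      obtain ⟨⟨a, b⟩, hmemp, rfl⟩ := hS1
      rw [Finset.mem_product, Finset.mem_range, Finset.mem_Icc] at hmemp
      rw [mem_Ifin]
      simp only [Fin.val_mk]
      omega
    apply hxm1
    rw [hF2, Finset.mem_image] at hS2
    obtain ⟨⟨a, P⟩, hmemp, rfl⟩ := hS2
    rw [Finset.mem_product, Finset.mem_range, Finset.mem_powerset] at hmemp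
    exact Finset.mem_union_left _ (mem_Ifin.2 ⟨by simp; omega, by simp⟩)
  rw [Finset.card_union_of_disjoint hdisj]
  have hc1 : F1.card = (v.val + 1) * (m - 1 - v.val) := by
    rw [hF1, Finset.card_image_of_injOn, Finset.card_product, Finset.card_range, Nat.card_Icc]
    · congr 1; omega
    · rintro ⟨a, b⟩ hab ⟨a', b'⟩ hab' heq
      rw [Finset.mem_coe, Finset.mem_product, Finset.mem_range, Finset.mem_Icc] at hab hab'
      obtain ⟨ha, hb1, hb2⟩ := hab
      obtain ⟨ha', hb1', hb2'⟩ := hab'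
      simp only at heq
      have h1 : (⟨a, by omega⟩ : Fin n) ∈ Ifin n a b := mem_Ifin.2 ⟨le_refl _, by simp; omega⟩
      have h2 : (⟨a', by omega⟩ : Fin n) ∈ Ifin n a' b' := mem_Ifin.2 ⟨le_refl _, by simp; omega⟩
      have h3 : (⟨b, by omega⟩ : Fin n) ∈ Ifin n a b := mem_Ifin.2 ⟨by simp; omega, le_refl _⟩
      have h4 : (⟨b', by omega⟩ : Fin n) ∈ Ifin n a' b' := mem_Ifin.2 ⟨by simp; omega, le_refl _⟩
      rw [heq] at h1 h3
      rw [← heq] at h2 h4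
      rw [mem_Ifin] at h1 h2 h3 h4
      simp only [Fin.val_mk] at h1 h2 h3 h4
      have : a = a' ∧ b = b' := by omega
      simp [Prod.ext_iff, this.1, this.2]
  have hc2 : F2.card = (v.val + 1) * 2 ^ g := by
    rw [hF2, Finset.card_image_of_injOn, Finset.card_product, Finset.card_range,
      Finset.card_powerset, card_Pend hn]
    rintro ⟨a, P⟩ hab ⟨a', P'⟩ hab' heq
    rw [Finset.mem_coe, Finset.mem_product, Finset.mem_range, Finset.mem_powerset] at hab hab'
    obtain ⟨ha, hP⟩ := hab
    obtain ⟨ha', hP'⟩ := hab'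
    simp only at heq
    have haa : a = a' := by
      have h1 : (⟨a, by omega⟩ : Fin n) ∈ Ifin n a (m-1) ∪ P :=
        Finset.mem_union_left _ (mem_Ifin.2 ⟨le_refl _, by simp; omega⟩)
      have h2 : (⟨a', by omega⟩ : Fin n) ∈ Ifin n a' (m-1) ∪ P' :=
        Finset.mem_union_left _ (mem_Ifin.2 ⟨le_refl _, by simp; omega⟩)
      rw [heq] at h1
      rw [← heq] at h2
      rw [Finset.mem_union, mem_Ifin] at h1 h2
      simp only [Fin.val_mk] at h1 h2
      rcases h1 with ⟨h1a, -⟩ | h1P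
      · rcases h2 with ⟨h2a, -⟩ | h2P
        · omega
        · have := mem_Pend.1 (hP h2P); simp at this; omega
      · have := mem_Pend.1 (hP' h1P); simp at this; omega
    subst haa
    have hPP : P = P' := by
      apply Finset.ext
      intro i
      constructor
      · intro hiP
        have him : m ≤ i.val := mem_Pend.1 (hP hiP)
        have : i ∈ Ifin n a (m-1) ∪ P' := heq ▸ Finset.mem_union_right _ hiP
        rcases Finset.mem_union.1 this with hI | h
        · have := mem_Ifin.1 hI; omega
        · exact h
      · intro hiP
        have him : m ≤ i.val := mem_Pend.1 (hP' hiP)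
        have : i ∈ Ifin n a (m-1) ∪ P := heq ▸ Finset.mem_union_right _ hiP
        rcases Finset.mem_union.1 this with hI | h
        · have := mem_Ifin.1 hI; omega
        · exact h
    simp [hPP]
  rw [hc1, hc2, ← Nat.mul_add]
lemma subtreeCount_eq_card {n g : ℕ} (v : Fin n) :
    subtreeCount (pathStar n g) v = (Finset.univ.filter
      (fun S : Finset (Fin n) => v ∈ S ∧ ((pathStar n g).induce (S : Set (Fin n))).Connected)).card := by
  rw [subtreeCount, Nat.card_eq_fintype_card, Fintype.card_subtype]

/-- pendant count is at most center count -/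
lemma count_pend_le {n g m : ℕ} (hm : n - g = m) (hn : n = m + g) (hm2 : 2 ≤ m)
    (p : Fin n) (hp : m ≤ p.val) :
    (Finset.univ.filter (fun S : Finset (Fin n) =>
        p ∈ S ∧ ((pathStar n g).induce (S : Set (Fin n))).Connected)).card
    ≤ (Finset.univ.filter (fun S : Finset (Fin n) =>
        (⟨m-1, by omega⟩ : Fin n) ∈ S ∧ ((pathStar n g).induce (S : Set (Fin n))).Connected)).card := by
  have hm1 : 1 ≤ m := by omega
  have hmn : m ≤ n := by omega
  set c : Fin n := ⟨m-1, by omega⟩ with hc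
  have hcv : c.val = m - 1 := rfl
  set B : Finset (Finset (Fin n)) := Finset.univ.filter (fun S : Finset (Fin n) =>
      p ∈ S ∧ c ∈ S ∧ ((pathStar n g).induce (S : Set (Fin n))).Connected) with hB
  have h1 : (Finset.univ.filter (fun S : Finset (Fin n) =>
      p ∈ S ∧ ((pathStar n g).induce (S : Set (Fin n))).Connected)) ⊆ insert {p} B := by
    intro S hS
    rw [Finset.mem_filter] at hS
    obtain ⟨-, hpS, hconn⟩ := hS
    have hgood := (conn_iff_good hm hm1 hmn).1 hconn
    rcases hgood with ⟨q, hqm, rfl⟩ | ⟨a, b, hab, hbm, hiff, hpend⟩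
    · have : p = q := by simpa using hpS
      subst this
      exact Finset.mem_insert_self _ _
    · have hb : b = m - 1 := hpend p hpS hp
      have hcS : c ∈ S := (hiff c (by omega)).2 ⟨by omega, by omega⟩
      exact Finset.mem_insert_of_mem (by
        rw [hB, Finset.mem_filter]
        exact ⟨Finset.mem_univ _, hpS, hcS, hconn⟩)
  have h2 : insert ({c} : Finset (Fin n)) B ⊆ (Finset.univ.filter (fun S : Finset (Fin n) =>
      c ∈ S ∧ ((pathStar n g).induce (S : Set (Fin n))).Connected)) := by
    intro S hS
    rcases Finset.mem_insert.1 hS with rfl | hSB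
    · rw [Finset.mem_filter]
      refine ⟨Finset.mem_univ _, Finset.mem_singleton_self _, ?_⟩
      rw [conn_iff_good hm hm1 hmn]
      refine Or.inr ⟨m-1, m-1, le_refl _, by omega, ?_, ?_⟩
      · intro i him
        rw [Finset.mem_singleton]
        have hiffc : i = c ↔ i.val = m - 1 :=
          ⟨fun h => h ▸ hcv, fun h => Fin.ext (h.trans hcv.symm)⟩
        rw [hiffc]
        omega
      · intro i hi him
        rfl
    · rw [hB, Finset.mem_filter] at hSB
      rw [Finset.mem_filter]
      exact ⟨Finset.mem_univ _, hSB.2.2⟩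
  have hcB : ({c} : Finset (Fin n)) ∉ B := by
    rw [hB, Finset.mem_filter]
    rintro ⟨-, hpc, -⟩
    rw [Finset.mem_singleton] at hpc
    have := congrArg Fin.val hpc
    omega
  calc (Finset.univ.filter (fun S : Finset (Fin n) =>
        p ∈ S ∧ ((pathStar n g).induce (S : Set (Fin n))).Connected)).card
      ≤ (insert ({p} : Finset (Fin n)) B).card := Finset.card_le_card h1
    _ ≤ B.card + 1 := Finset.card_insert_le _ _
    _ = (insert ({c} : Finset (Fin n)) B).card := (Finset.card_insert_of_notMem hcB).symm
    _ ≤ _ := Finset.card_le_card h2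

/-- key arithmetic inequality -/
lemma arith_max (m e j : ℕ) (he1 : 1 ≤ e) (hem : e ≤ m) (hj1 : 1 ≤ j) (hjm : j ≤ m) :
    j * ((m - j) + e) ≤ ((m + e) / 2) * ((m - (m + e) / 2) + e) := by
  set d := (m + e) / 2 with hd
  have h2d : 2 * d ≤ m + e := by omega
  have h2d' : m + e ≤ 2 * d + 1 := by omega
  have hdm : d ≤ m := by omega
  have hsub1 : (m - j) + e = m + e - j := by omega
  have hsub2 : (m - d) + e = m + e - d := by omega
  rw [hsub1, hsub2]
  zify [show j ≤ m + e by omega, show d ≤ m + e by omega]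
  rcases le_or_gt j d with h | h
  · nlinarith [mul_nonneg (by push_cast; omega : (0:ℤ) ≤ (d:ℤ) - j)
      (by push_cast; omega : (0:ℤ) ≤ (m:ℤ) + e - d - j)]
  · nlinarith [mul_nonneg (by push_cast; omega : (0:ℤ) ≤ (j:ℤ) - d)
      (by push_cast; omega : (0:ℤ) ≤ (j:ℤ) + d - m - e)]

/-- the main core-membership lemma -/
lemma core_le {n g m : ℕ} (hm : n - g = m) (hn : n = m + g) (hg : 1 ≤ g) (hm2 : 2 ≤ m)
    (he : 2 ^ g ≤ m) (t : Fin n) (htv : t.val = (m + 2 ^ g) / 2 - 1) (u : Fin n) :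
    subtreeCount (pathStar n g) u ≤ subtreeCount (pathStar n g) t := by
  have he1 : 1 ≤ 2 ^ g := Nat.one_le_two_pow
  have htm : t.val < m := by omega
  rw [subtreeCount_eq_card, subtreeCount_eq_card, count_path hm hn hm2 t htm]
  have hft : (t.val + 1) * ((m - 1 - t.val) + 2 ^ g)
      = ((m + 2 ^ g) / 2) * ((m - (m + 2 ^ g) / 2) + 2 ^ g) := by
    have e1 : t.val + 1 = (m + 2 ^ g) / 2 := by omega
    have e2 : m - 1 - t.val = m - (m + 2 ^ g) / 2 := by omega
    rw [e1, e2]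
  rw [hft]
  rcases lt_or_ge u.val m with hu | hu
  · rw [count_path hm hn hm2 u hu]
    have e3 : m - 1 - u.val = m - (u.val + 1) := by omega
    rw [e3]
    exact arith_max m (2 ^ g) (u.val + 1) he1 he (by omega) (by omega)
  · refine le_trans (count_pend_le hm hn hm2 u hu) ?_
    have hcm : ((⟨m - 1, by omega⟩ : Fin n)).val < m := by show m - 1 < m; omega
    rw [count_path hm hn hm2 _ hcm]
    have e4 : ((⟨m - 1, by omega⟩ : Fin n) : ℕ) = m - 1 := rfl
    rw [e4]
    have e5 : m - 1 + 1 = m := by omega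
    have e6 : m - 1 - (m - 1) = m - m := by omega
    rw [e5, e6]
    exact arith_max m (2 ^ g) m he1 he (by omega) (le_refl m)
/-- If `g₀` is the smallest positive integer with `2 ^ g₀ + 1 > n - g₀`,
then for `1 ≤ k ≤ g₀ - 2` the subtree core of `P_{n-g₀+k, g₀-k}` contains a path
vertex of label `n - g₀ - α` for some `α ≥ 0` (the vertex with label `L` has
index `L - 1`, i.e. `i.val + 1 = L`). -/
theorem subtreeCore_label_le (n g₀ : ℕ) (hn : 5 ≤ n) (hg₀ : IsMinimalG0 n g₀)
    (k : ℕ) (hk1 : 1 ≤ k) (hk2 : k ≤ g₀ - 2) :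
    ∃ α : ℕ, ∃ i : Fin n, i.val + 1 + α = n - g₀ ∧
      i ∈ subtreeCore (pathStar n (g₀ - k)) := by
  obtain ⟨hg0pos, hg0lt, hg0min⟩ := hg₀
  have hg3 : 3 ≤ g₀ := by omega
  set g := g₀ - k with hg
  have hg2 : 2 ≤ g := by omega
  have hA : 2 ^ g + 1 ≤ n - g := by
    by_contra h
    have := hg0min g (by omega) (by omega)
    omega
  have hB : 2 ^ (g₀ - 1) + 1 ≤ n - (g₀ - 1) := by
    by_contra h
    have := hg0min (g₀ - 1) (by omega) (by omega)
    omega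
  have he1 : 1 ≤ 2 ^ g := Nat.one_le_two_pow
  set m := n - g with hm
  have hnm : n = m + g := by omega
  have hm2 : 2 ≤ m := by omega
  have he : 2 ^ g ≤ m := by omega
  have hkey : 2 ^ g + k ≤ 2 ^ (g₀ - 1) + 1 := by
    by_cases hk : k = 1
    · subst hk
      have : g = g₀ - 1 := by omega
      rw [this]
    · have h1 : 2 ^ g ≤ 2 ^ (g₀ - 2) := Nat.pow_le_pow_right (by norm_num) (by omega)
      have h2 : g₀ - 2 < 2 ^ (g₀ - 2) := Nat.lt_two_pow_self
      have h3 : 2 ^ (g₀ - 1) = 2 ^ (g₀ - 2) * 2 := by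
        rw [← pow_succ]
        congr 1
        omega
      omega
  have hng0 : g₀ ≤ n := by omega
  have hd_le : (m + 2 ^ g) / 2 ≤ n - g₀ := by omega
  have hd1 : 1 ≤ (m + 2 ^ g) / 2 := by omega
  refine ⟨(n - g₀) - (m + 2 ^ g) / 2, ⟨(m + 2 ^ g) / 2 - 1, by omega⟩, ?_, ?_⟩
  · show ((m + 2 ^ g) / 2 - 1) + 1 + ((n - g₀) - (m + 2 ^ g) / 2) = n - g₀
    omega
  · intro u
    exact core_le rfl hnm (by omega) hm2 he _ rfl u


end TreeCenters

end
end

section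
/- The sequence δ_n(C,C_d)/n converges to 1/4 as n → ∞, where δ_n(C,C_d) is the maximum, over all trees T on n vertices, of the distance between the center and the centroid of T. -/
open scoped Classical

noncomputable section

namespace TreeCenters

variable {V : Type*}

open SimpleGraph

section AuxBasic

variable {G : SimpleGraph V}

/-- Walks avoiding a vertex give reachability in the vertex-deleted induced subgraph. -/
lemma reachable_avoid {v : V} :
    ∀ {a b : V} (w : G.Walk a b), v ∉ w.support → ∀ (ha : a ≠ v) (hb : b ≠ v),
      (G.induce {u | u ≠ v}).Reachable ⟨a, ha⟩ ⟨b, hb⟩ := by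
  intro a b w
  induction w with
  | nil => intro _ ha hb; rfl
  | @cons a c b h q ih =>
    intro hs ha hb
    have hsup : v ∉ q.support := fun hv => hs (by simp [hv])
    have hc : c ≠ v := fun hcv => hs (by simp [← hcv, q.start_mem_support])
    have hadj : (G.induce {u | u ≠ v}).Adj ⟨a, ha⟩ ⟨c, hc⟩ := by
      simp only [comap_adj, Function.Embedding.coe_subtype]
      exact h
    exact (hadj.reachable).trans (ih hsup hc hb)

/-- Reachability in the vertex-deleted induced subgraph gives a walk avoiding the vertex. -/
lemma walk_of_reachable_avoid {v a b : V} (ha : a ≠ v) (hb : b ≠ v)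
    (h : (G.induce {u | u ≠ v}).Reachable ⟨a, ha⟩ ⟨b, hb⟩) :
    ∃ w : G.Walk a b, v ∉ w.support := by
  obtain ⟨p⟩ := h
  refine ⟨p.map (Embedding.induce {u | u ≠ v}).toHom, ?_⟩
  intro hv
  replace hv : v ∈ (p.map (Embedding.induce {u | u ≠ v}).toHom).support := hv
  rw [Walk.support_map, List.mem_map] at hv
  obtain ⟨x, _, hx⟩ := hv
  exact x.2 hx

/-- The vertex set (in `V`) of a connected component of `G - v`. -/
def csupp {v : V} (c : (G.induce {u | u ≠ v}).ConnectedComponent) : Set V :=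
  Subtype.val '' c.supp

lemma card_supp_eq_ncard_csupp {v : V} (c : (G.induce {u | u ≠ v}).ConnectedComponent) :
    Nat.card c.supp = (csupp c).ncard := by
  rw [csupp, Set.ncard_image_of_injective _ Subtype.val_injective,
    ← Nat.card_coe_set_eq]

lemma mem_csupp_iff {v : V} {c : (G.induce {u | u ≠ v}).ConnectedComponent} {x : V} :
    x ∈ csupp c ↔ ∃ hx : x ≠ v, SimpleGraph.connectedComponentMk _ ⟨x, hx⟩ = c := by
  constructor
  · rintro ⟨⟨y, hy⟩, hmem, rfl⟩
    exact ⟨hy, (ConnectedComponent.mem_supp_iff _ _).mp hmem⟩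
  · rintro ⟨hx, hc⟩
    exact ⟨⟨x, hx⟩, (ConnectedComponent.mem_supp_iff _ _).mpr hc, rfl⟩

lemma ne_of_mem_csupp {v : V} {c : (G.induce {u | u ≠ v}).ConnectedComponent} {x : V}
    (h : x ∈ csupp c) : x ≠ v := by
  obtain ⟨hx, -⟩ := mem_csupp_iff.mp h
  exact hx

section FiniteV

variable [Finite V]

lemma le_weight {v : V} (c : (G.induce {u | u ≠ v}).ConnectedComponent) :
    Nat.card c.supp ≤ weight G v :=
  le_csSup ((Set.finite_range _).bddAbove) ⟨c, rfl⟩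

lemma weight_le {v : V} (hne : Nonempty {u : V | u ≠ v}) {m : ℕ}
    (h : ∀ c : (G.induce {u | u ≠ v}).ConnectedComponent, Nat.card c.supp ≤ m) :
    weight G v ≤ m := by
  have : Nonempty ((G.induce {u | u ≠ v}).ConnectedComponent) :=
    ⟨SimpleGraph.connectedComponentMk _ (Classical.choice hne)⟩
  exact csSup_le (Set.range_nonempty _) (by rintro d ⟨c, rfl⟩; exact h c)

variable [Nonempty V]

lemma dist_le_eccent {v u : V} : G.dist v u ≤ eccent G v :=
  le_csSup ((Set.finite_range _).bddAbove) ⟨u, rfl⟩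

lemma eccent_le {v : V} {m : ℕ} (h : ∀ u, G.dist v u ≤ m) : eccent G v ≤ m :=
  csSup_le (Set.range_nonempty _) (by rintro d ⟨u, rfl⟩; exact h u)

lemma exists_eccent_eq (v : V) : ∃ u, G.dist v u = eccent G v := by
  have h := Nat.sSup_mem (Set.range_nonempty fun u => G.dist v u)
    ((Set.finite_range _).bddAbove)
  exact h

lemma center_nonempty : (center G).Nonempty := by
  obtain ⟨z, hz⟩ := Finite.exists_min (eccent G)
  exact ⟨z, hz⟩

lemma centroid_nonempty : (centroid G).Nonempty := by
  obtain ⟨z, hz⟩ := Finite.exists_min (weight G)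
  exact ⟨z, hz⟩

end FiniteV

/-- Lower bound on graph distance via an integer Lipschitz function. -/
lemma le_dist_of_lipschitz (f : V → ℤ) (hf : ∀ a b, G.Adj a b → (f a - f b).natAbs ≤ 1)
    {u v : V} (h : G.Reachable u v) : (f u - f v).natAbs ≤ G.dist u v := by
  obtain ⟨p, hp⟩ := h.exists_walk_length_eq_dist
  rw [← hp]
  clear hp h
  induction p with
  | nil => simp
  | @cons a c b hadj q ih =>
    calc (f a - f b).natAbs ≤ (f a - f c).natAbs + (f c - f b).natAbs := by
          have := Int.natAbs_add_le (f a - f c) (f c - f b)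
          simpa using this
    _ ≤ 1 + q.length := add_le_add (hf _ _ hadj) ih
    _ = (Walk.cons hadj q).length := by simp [Nat.add_comm]

end AuxBasic

/-! ### Tree lemmas -/

section TreeLemmas

variable {G : SimpleGraph V} (hT : G.IsTree)

include hT

/-- In a tree every path realizes the distance. -/
lemma isPath_length_eq_dist {a b : V} (p : G.Walk a b) (hp : p.IsPath) :
    p.length = G.dist a b := by
  obtain ⟨q, hq, hql⟩ := hT.isConnected.exists_path_of_dist a b
  have := hT.IsAcyclic.path_unique ⟨p, hp⟩ ⟨q, hq⟩
  rw [← hql]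
  exact congrArg Walk.length (congrArg Subtype.val this)

/-- In a tree, distances to the two endpoints of an edge differ by exactly one. -/
lemma adj_dist_cases {z y : V} (h : G.Adj z y) (x : V) :
    G.dist x y = G.dist x z + 1 ∨ G.dist x z = G.dist x y + 1 := by
  obtain ⟨q, hq, hql⟩ := hT.isConnected.exists_path_of_dist x z
  by_cases hy : y ∈ q.support
  · right
    have h1 : (q.takeUntil y hy).length = G.dist x y :=
      isPath_length_eq_dist hT _ (hq.takeUntil hy)
    have h2 : (q.dropUntil y hy).length = G.dist y z :=
      isPath_length_eq_dist hT _ (hq.dropUntil hy)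
    have h3 : G.dist y z = 1 := SimpleGraph.dist_eq_one_iff_adj.mpr h.symm
    have h4 : (q.takeUntil y hy).length + (q.dropUntil y hy).length = q.length := by
      have := congrArg Walk.length (q.take_spec hy)
      rwa [Walk.length_append] at this
    omega
  · left
    have hcp : (q.concat h).IsPath := by
      rw [Walk.isPath_def, Walk.support_concat]
      refine List.Nodup.append hq.support_nodup (List.nodup_singleton y) ?_
      intro a ha hay
      rw [List.mem_singleton] at hay
      subst hay
      exact hy ha
    have := isPath_length_eq_dist hT _ hcp
    rw [Walk.length_concat, hql] at this
    omega

end TreeLemmas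

section TreeLemmas2

variable {G : SimpleGraph V} (hT : G.IsTree)

include hT

/-- If `x` is strictly closer to `z` than to `y` (with `z ~ y`), there is a walk from `x`
to `z` avoiding the edge `s(z,y)`. -/
lemma exists_walk_avoid_edge {z y x : V} (h : G.Adj z y) (hx : G.dist x z < G.dist x y) :
    ∃ w : G.Walk x z, s(z, y) ∉ w.edges := by
  obtain ⟨q, hq, hql⟩ := hT.isConnected.exists_path_of_dist x z
  refine ⟨q, fun he => ?_⟩
  have hy : y ∈ q.support := q.snd_mem_support_of_mem_edges he
  have h1 : (q.takeUntil y hy).length = G.dist x y :=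
    isPath_length_eq_dist hT _ (hq.takeUntil hy)
  have h2 := Walk.length_takeUntil_le q hy
  omega

/-- Key crossing inequality: if `z ~ y`, `x` is on `z`'s side and `x'` on `y`'s side,
then `dist x x' ≥ dist x z + 1 + dist y x'`. -/
lemma cross_dist {z y x x' : V} (h : G.Adj z y)
    (hx : G.dist x z < G.dist x y) (hx' : G.dist x' y < G.dist x' z) :
    G.dist x z + 1 + G.dist y x' ≤ G.dist x x' := by
  have hbridge : G.IsBridge s(z, y) :=
    (isAcyclic_iff_forall_adj_isBridge.mp hT.IsAcyclic) h
  have hnr : ¬(G \ fromEdgeSet {s(z, y)}).Reachable z y := isBridge_iff.mp hbridge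
  obtain ⟨p, hp, hpl⟩ := hT.isConnected.exists_path_of_dist x x'
  -- the shortest path `p` must use the edge `s(z,y)`; in particular `z ∈ p.support`
  have hz : z ∈ p.support := by
    by_contra hz
    have hpe : s(z, y) ∉ p.edges := fun he => hz (p.fst_mem_support_of_mem_edges he)
    obtain ⟨w1, hw1⟩ := exists_walk_avoid_edge hT h hx
    obtain ⟨w2, hw2⟩ := exists_walk_avoid_edge hT h.symm hx'
    -- walk z → x → x' → y avoiding the edge
    have : (G \ fromEdgeSet {s(z, y)}).Reachable z y := by
      refine (reachable_deleteEdges_iff_exists_walk (G := G)).mpr ?_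
      refine ⟨(w1.reverse.append p).append w2, ?_⟩
      simp only [Walk.edges_append, Walk.edges_reverse, List.mem_append, List.mem_reverse]
      rintro (⟨h1 | h2⟩ | h3)
      · exact hw1 h1
      · exact hpe h2
      · rw [Sym2.eq_swap] at h3; exact hw2 h3
    exact hnr this
  have h1 : (p.takeUntil z hz).length + (p.dropUntil z hz).length = p.length := by
    have := congrArg Walk.length (p.take_spec hz)
    rwa [Walk.length_append] at this
  have h2 : G.dist x z ≤ (p.takeUntil z hz).length := SimpleGraph.dist_le _
  have h3 : G.dist z x' ≤ (p.dropUntil z hz).length := SimpleGraph.dist_le _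
  have hc1 : G.dist z x' = G.dist x' z := SimpleGraph.dist_comm
  have hc2 : G.dist y x' = G.dist x' y := SimpleGraph.dist_comm
  have h4 : G.dist z x' = 1 + G.dist y x' := by
    rcases adj_dist_cases hT h x' with hc | hc
    · omega
    · omega
  omega

end TreeLemmas2

section TreeWeight

variable {G : SimpleGraph V} (hT : G.IsTree) [Finite V] [Nonempty V]

include hT

/-- In a tree, the weight of a vertex is at least its eccentricity. -/
lemma eccent_le_weight {c : V} (he : 1 ≤ eccent G c) : eccent G c ≤ weight G c := by
  obtain ⟨w₀, hw₀⟩ := exists_eccent_eq (G := G) c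
  obtain ⟨p, hp, hpl⟩ := hT.isConnected.exists_path_of_dist c w₀
  have hnn : ¬p.Nil := by
    rw [Walk.not_nil_iff_lt_length]
    omega
  obtain ⟨y₀, hadj, q, rfl⟩ := Walk.not_nil_iff.mp hnn
  have hqp : q.IsPath ∧ c ∉ q.support := (Walk.cons_isPath_iff _ _).mp hp
  have hy₀ : y₀ ≠ c := fun hh => G.irrefl (hh ▸ hadj)
  set K : (G.induce {u | u ≠ c}).ConnectedComponent :=
    SimpleGraph.connectedComponentMk _ ⟨y₀, hy₀⟩ with hK
  have hsub : {x | x ∈ q.support} ⊆ csupp K := by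
    intro x hx
    have hxc : x ≠ c := fun hh => hqp.2 (hh ▸ hx)
    have hsupsub := q.support_takeUntil_subset hx
    have : c ∉ (q.takeUntil x hx).support := fun hc => hqp.2 (hsupsub hc)
    have hreach := reachable_avoid (q.takeUntil x hx) this hy₀ hxc
    exact mem_csupp_iff.mpr ⟨hxc, ConnectedComponent.sound hreach.symm⟩
  have hcard : {x | x ∈ q.support}.ncard = q.length + 1 := by
    have : {x | x ∈ q.support} = ↑q.support.toFinset := by
      ext x; simp
    rw [this, Set.ncard_coe_finset, List.toFinset_card_of_nodup hqp.1.support_nodup,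
      Walk.length_support]
  have hK' : Nat.card K.supp = (csupp K).ncard := card_supp_eq_ncard_csupp K
  have h1 : q.length + 1 = eccent G c := by
    rw [← hw₀, ← hpl]; simp [Walk.length_cons, Nat.add_comm]
  calc eccent G c = {x | x ∈ q.support}.ncard := by omega
    _ ≤ (csupp K).ncard := Set.ncard_le_ncard hsub (Set.toFinite _)
    _ = Nat.card K.supp := hK'.symm
    _ ≤ weight G c := le_weight K

/-- For a centroid vertex `c` of a tree with at least two vertices, `2 * weight c ≤ |V|`. -/
lemma two_weight_le_card {c z0 : V} (hc : c ∈ centroid G) (hz0 : z0 ≠ c) :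
    2 * weight G c ≤ Nat.card V := by
  have hNE : Nonempty ({u : V | u ≠ c}) := ⟨⟨z0, hz0⟩⟩
  have hNEC : Nonempty ((G.induce {u : V | u ≠ c}).ConnectedComponent) :=
    ⟨SimpleGraph.connectedComponentMk _ ⟨z0, hz0⟩⟩
  -- the weight is attained at a component K₀
  have hmem : weight G c ∈ Set.range
      (fun K : (G.induce {u : V | u ≠ c}).ConnectedComponent => Nat.card K.supp) := by
    rw [weight]
    exact Nat.sSup_mem (Set.range_nonempty _) ((Set.finite_range _).bddAbove)
  obtain ⟨K₀, hK₀⟩ := hmem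
  obtain ⟨x₀, hx₀⟩ := K₀.exists_rep
  -- find a neighbour u' of c inside K₀
  obtain ⟨p₁, hp₁, hp₁l⟩ := hT.isConnected.exists_path_of_dist c ↑x₀
  have hnn : ¬p₁.Nil := Walk.not_nil_of_ne (fun hh => x₀.2 hh.symm)
  obtain ⟨u', hadj, q₁, rfl⟩ := Walk.not_nil_iff.mp hnn
  have hq₁p : q₁.IsPath ∧ c ∉ q₁.support := (Walk.cons_isPath_iff _ _).mp hp₁
  have hu' : u' ≠ c := fun hh => G.irrefl (hh ▸ hadj)
  have hu'K₀ : SimpleGraph.connectedComponentMk _ (⟨u', hu'⟩ : {u : V | u ≠ c}) = K₀ := by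
    have hreach := reachable_avoid q₁ hq₁p.2 hu' x₀.2
    rw [← hx₀]
    exact ConnectedComponent.sound hreach
  have hcu' : c ≠ u' := fun hh => hu' hh.symm
  set M : (G.induce {u : V | u ≠ u'}).ConnectedComponent :=
    SimpleGraph.connectedComponentMk _ ⟨c, hcu'⟩ with hM
  have hbridge : G.IsBridge s(u', c) :=
    (isAcyclic_iff_forall_adj_isBridge.mp hT.IsAcyclic) hadj.symm
  -- the component of `c` in `G - u'` is disjoint from `K₀`
  have hdisj : ∀ x, x ∈ csupp M → x ∉ csupp K₀ := by
    intro x hxM hxK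
    obtain ⟨hxu', hxMeq⟩ := mem_csupp_iff.mp hxM
    obtain ⟨hxc, hxKeq⟩ := mem_csupp_iff.mp hxK
    have hra : (G.induce {u : V | u ≠ u'}).Reachable ⟨x, hxu'⟩ ⟨c, hcu'⟩ :=
      ConnectedComponent.exact (hxMeq.trans hM)
    have hrb : (G.induce {u : V | u ≠ c}).Reachable ⟨x, hxc⟩ ⟨u', hu'⟩ :=
      ConnectedComponent.exact (hxKeq.trans hu'K₀.symm)
    obtain ⟨wa, hwa⟩ := walk_of_reachable_avoid hxu' hcu' hra
    obtain ⟨wb, hwb⟩ := walk_of_reachable_avoid hxc hu' hrb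
    have : (G \ fromEdgeSet {s(u', c)}).Reachable u' c := by
      refine (reachable_deleteEdges_iff_exists_walk (G := G)).mpr ?_
      refine ⟨wb.reverse.append wa, ?_⟩
      simp only [Walk.edges_append, Walk.edges_reverse, List.mem_append, List.mem_reverse]
      rintro (h1 | h2)
      · exact hwb (wb.snd_mem_support_of_mem_edges h1)
      · exact hwa (wa.fst_mem_support_of_mem_edges h2)
    exact (isBridge_iff.mp hbridge) this
  -- every other component of `G - u'` is contained in `K₀` minus `u'`
  have hcov : ∀ N : (G.induce {u : V | u ≠ u'}).ConnectedComponent, N ≠ M →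
      csupp N ⊆ csupp K₀ \ {u'} := by
    intro N hNM x hxN
    obtain ⟨hxu', hxNeq⟩ := mem_csupp_iff.mp hxN
    have hxc : x ≠ c := by
      rintro rfl
      exact hNM (hxNeq.symm.trans rfl)
    obtain ⟨p₂, hp₂, hp₂l⟩ := hT.isConnected.exists_path_of_dist x c
    by_cases hu'mem : u' ∈ p₂.support
    · -- the path from x to c goes through u'; its prefix avoids c
      have htp : (p₂.takeUntil u' hu'mem).IsPath := hp₂.takeUntil hu'mem
      have hct : c ∉ (p₂.takeUntil u' hu'mem).support := by
        intro hcmem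
        have hds : c ∈ (p₂.dropUntil u' hu'mem).support := Walk.end_mem_support _
        have hdtail : c ∈ (p₂.dropUntil u' hu'mem).support.tail := by
          have := Walk.support_eq_cons (p₂.dropUntil u' hu'mem)
          rw [this] at hds
          rcases List.mem_cons.mp hds with h1 | h1
          · exact absurd h1 hcu'
          · exact h1
        have hnodup := hp₂.support_nodup
        rw [← Walk.take_spec p₂ hu'mem, Walk.support_append] at hnodup
        exact (List.disjoint_of_nodup_append hnodup) hcmem hdtail
      have hreach := reachable_avoid (p₂.takeUntil u' hu'mem) hct hxc hu'
      have : x ∈ csupp K₀ := mem_csupp_iff.mpr ⟨hxc, (ConnectedComponent.sound hreach).trans hu'K₀⟩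
      exact ⟨this, hxu'⟩
    · -- otherwise x is in the component of c, contradiction
      exfalso
      have hreach := reachable_avoid p₂ hu'mem hxu' hcu'
      exact hNM (hxNeq.symm.trans (ConnectedComponent.sound hreach))
  -- counting
  have hWcard : (csupp K₀).ncard = weight G c := by
    rw [← card_supp_eq_ncard_csupp]
    exact hK₀
  have hu'memK₀ : u' ∈ csupp K₀ := mem_csupp_iff.mpr ⟨hu', hu'K₀⟩
  have hWpos : 1 ≤ weight G c := by
    rw [← hWcard]
    exact (Set.ncard_pos (Set.toFinite _)).mpr ⟨u', hu'memK₀⟩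
  have hwu'le : weight G u' ≤ max (Nat.card V - weight G c) (weight G c - 1) := by
    refine weight_le ⟨⟨c, hcu'⟩⟩ ?_
    intro N
    rw [card_supp_eq_ncard_csupp]
    by_cases hNM : N = M
    · refine le_max_of_le_left ?_
      have hsub : csupp N ⊆ Set.univ \ csupp K₀ := by
        intro x hx
        exact ⟨Set.mem_univ x, hdisj x (hNM ▸ hx)⟩
      calc (csupp N).ncard ≤ (Set.univ \ csupp K₀).ncard :=
            Set.ncard_le_ncard hsub (Set.toFinite _)
        _ = Nat.card V - weight G c := by
            rw [Set.ncard_diff (Set.subset_univ _), Set.ncard_univ, hWcard]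
    · refine le_max_of_le_right ?_
      calc (csupp N).ncard ≤ (csupp K₀ \ {u'}).ncard :=
            Set.ncard_le_ncard (hcov N hNM) (Set.toFinite _)
        _ = weight G c - 1 := by
            rw [Set.ncard_diff_singleton_of_mem hu'memK₀, hWcard]
  have hcmin : weight G c ≤ weight G u' := hc u'
  have hcardV : weight G c ≤ Nat.card V := by
    rw [← hWcard]
    calc (csupp K₀).ncard ≤ (Set.univ : Set V).ncard := Set.ncard_le_ncard (Set.subset_univ _) (Set.toFinite _)
      _ = Nat.card V := Set.ncard_univ V
  rcases le_max_iff.mp (hcmin.trans hwu'le) with h | h <;> omega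

end TreeWeight

section UpperBound

variable {G : SimpleGraph V} (hT : G.IsTree) [Finite V] [Nonempty V]

include hT

/-- Main upper bound: in a tree, `4·d(z,c) ≤ |V| + 2` for `z` a center vertex and
`c` a centroid vertex. -/
lemma four_dist_le {z c : V} (hz : z ∈ center G) (hc : c ∈ centroid G) :
    4 * G.dist z c ≤ Nat.card V + 2 := by
  set d := G.dist z c with hd
  rcases Nat.eq_zero_or_pos d with hd0 | hdpos
  · omega
  have hzc : z ≠ c := by
    rintro rfl
    rw [SimpleGraph.dist_self] at hd
    omega
  set r := eccent G z with hr
  have hdr : d ≤ r := dist_le_eccent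
  obtain ⟨p, hp, hpl⟩ := hT.isConnected.exists_path_of_dist z c
  have hnn : ¬p.Nil := by rw [Walk.not_nil_iff_lt_length]; omega
  obtain ⟨y, hadj, q, rfl⟩ := Walk.not_nil_iff.mp hnn
  have hqp : q.IsPath ∧ z ∉ q.support := (Walk.cons_isPath_iff _ _).mp hp
  have hyc : G.dist y c + 1 = d := by
    have h1 : q.length = G.dist y c := isPath_length_eq_dist hT q hqp.1
    have h2 : q.length + 1 = d := by rw [hd, ← hpl]; simp [Nat.add_comm]
    omega
  -- find a far vertex on `z`'s side of the edge `z ~ y`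
  have hw : ∃ w, G.dist w z < G.dist w y ∧ r ≤ G.dist z w + 1 := by
    by_contra hcon
    push_neg at hcon
    have heccy : eccent G y ≤ r - 1 := by
      refine eccent_le ?_
      intro u
      have hcomm1 : G.dist y u = G.dist u y := SimpleGraph.dist_comm
      have hcomm2 : G.dist z u = G.dist u z := SimpleGraph.dist_comm
      have hzu : G.dist z u ≤ r := dist_le_eccent
      rcases adj_dist_cases hT hadj u with hcase | hcase
      · have := hcon u (by omega)
        omega
      · omega
    have := hz y
    omega
  obtain ⟨w, hw1, hw2⟩ := hw
  have hcy : G.dist c y < G.dist c z := by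
    have h1 : G.dist c y = G.dist y c := SimpleGraph.dist_comm
    have h2 : G.dist c z = G.dist z c := SimpleGraph.dist_comm
    omega
  have hcross := cross_dist hT hadj hw1 hcy
  have hcomm3 : G.dist w z = G.dist z w := SimpleGraph.dist_comm
  have hcomm4 : G.dist y c = G.dist c y := SimpleGraph.dist_comm
  -- dist w c ≥ r + d - 1 ≥ 2d - 1
  have hwc : 2 * d ≤ G.dist w c + 1 := by omega
  have hecc : 2 * d ≤ eccent G c + 1 := by
    have h1 : G.dist c w ≤ eccent G c := dist_le_eccent
    have h2 : G.dist c w = G.dist w c := SimpleGraph.dist_comm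
    omega
  have hecc1 : 1 ≤ eccent G c := by
    have h1 : G.dist c z ≤ eccent G c := dist_le_eccent
    omega
  have hweight : eccent G c ≤ weight G c := eccent_le_weight hT hecc1
  have hcard := two_weight_le_card hT hc hzc
  omega

end UpperBound

/-! ### The broom tree -/

section Broom

/-- Invariant along reachability. -/
lemma reachable_invariant {α : Type*} {H : SimpleGraph α} {P : α → Prop}
    (h : ∀ a b, H.Adj a b → (P a ↔ P b)) {u v : α} (hr : H.Reachable u v) : P u ↔ P v := by
  obtain ⟨w⟩ := hr
  induction w with
  | nil => exact Iff.rfl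
  | cons hadj q ih => exact (h _ _ hadj).trans ih

/-- An isolated vertex is reachable only from itself. -/
lemma eq_of_reachable_isolated {α : Type*} {H : SimpleGraph α} {ℓ x : α}
    (h : ∀ y, ¬H.Adj ℓ y) (hr : H.Reachable x ℓ) : x = ℓ := by
  obtain ⟨w⟩ := hr.symm
  cases w with
  | nil => rfl
  | cons hadj q => exact absurd hadj (h _)

/-- The broom graph: a path `0, 1, …, L-1` together with `n - L` leaves attached
to the vertex `L-1`. -/
def broom (n L : ℕ) : SimpleGraph (Fin n) :=
  SimpleGraph.fromRel fun i j =>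
    (i.val + 1 = j.val ∧ j.val < L) ∨ (i.val = L - 1 ∧ L ≤ j.val)

variable {n L : ℕ}

/-- Potential function for the broom. -/
def fB (L : ℕ) (x : Fin n) : ℤ := if x.val < L then (x.val : ℤ) else (L : ℤ)

lemma broom_adj_cases {i j : Fin n} (h : (broom n L).Adj i j) :
    (i.val + 1 = j.val ∧ j.val < L) ∨ (j.val + 1 = i.val ∧ i.val < L) ∨
      (i.val = L - 1 ∧ L ≤ j.val) ∨ (j.val = L - 1 ∧ L ≤ i.val) := by
  rw [broom, SimpleGraph.fromRel_adj] at h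
  tauto

lemma broom_adj_path {i j : Fin n} (h1 : i.val + 1 = j.val) (h2 : j.val < L) :
    (broom n L).Adj i j := by
  rw [broom, SimpleGraph.fromRel_adj]
  refine ⟨fun he => ?_, Or.inl (Or.inl ⟨h1, h2⟩)⟩
  have := congrArg Fin.val he
  omega

lemma broom_adj_leaf {i j : Fin n} (h1 : i.val = L - 1) (h2 : L ≤ j.val) (hL2 : 2 ≤ L) :
    (broom n L).Adj i j := by
  rw [broom, SimpleGraph.fromRel_adj]
  refine ⟨fun he => ?_, Or.inl (Or.inr ⟨h1, h2⟩)⟩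
  have := congrArg Fin.val he
  omega

lemma broom_lip (hL2 : 2 ≤ L) (a b : Fin n) (h : (broom n L).Adj a b) :
    ((fB L a) - (fB L b)).natAbs ≤ 1 := by
  rcases broom_adj_cases h with ⟨h1, h2⟩ | ⟨h1, h2⟩ | ⟨h1, h2⟩ | ⟨h1, h2⟩ <;>
    (simp only [fB]; split_ifs <;> omega)

/-- Monotone path walks inside the broom. -/
lemma broom_walk_path (hLn : L ≤ n) {a b : Fin n} (hab : a.val ≤ b.val) (hb : b.val < L) :
    ∃ w : (broom n L).Walk a b, w.length = b.val - a.val ∧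
      ∀ x ∈ w.support, a.val ≤ x.val ∧ x.val ≤ b.val := by
  obtain ⟨k, hk⟩ : ∃ k, b.val - a.val = k := ⟨_, rfl⟩
  induction k generalizing a with
  | zero =>
    have : a = b := Fin.val_injective (by omega)
    subst this
    exact ⟨Walk.nil, by simp, by simp⟩
  | succ k ih =>
    have hlt : a.val < b.val := by omega
    have ha' : a.val + 1 < n := by omega
    set a' : Fin n := ⟨a.val + 1, ha'⟩ with haa
    have hadj : (broom n L).Adj a a' := broom_adj_path rfl (by simp [haa]; omega)
    obtain ⟨w, hw1, hw2⟩ := ih (a := a') (by simp [haa]; omega) (by simp [haa]; omega)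
    refine ⟨Walk.cons hadj w, by simp [hw1, haa]; omega, ?_⟩
    intro x hx
    rcases List.mem_cons.mp (by simpa using hx) with h1 | h1
    · subst h1; omega
    · have := hw2 x h1
      simp [haa] at this
      omega

lemma broom_reach_hub (hL2 : 2 ≤ L) (hLn : L < n) {hub : Fin n} (hhub : hub.val = L - 1)
    (x : Fin n) : (broom n L).Reachable x hub := by
  by_cases hx : x.val < L
  · have h1 : x.val ≤ hub.val := by omega
    have h2 : hub.val < L := by omega
    obtain ⟨w, -, -⟩ := broom_walk_path (le_of_lt hLn) h1 h2
    exact ⟨w⟩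
  · have h2 : L ≤ x.val := by omega
    exact ((broom_adj_leaf (i := hub) (j := x) hhub h2 hL2).symm).reachable

lemma broom_connected (hL2 : 2 ≤ L) (hLn : L < n) : (broom n L).Connected := by
  have hn : 0 < n := by omega
  have hub : Fin n := ⟨L - 1, by omega⟩
  rw [connected_iff]
  refine ⟨fun x y => ?_, ⟨⟨0, hn⟩⟩⟩
  exact (broom_reach_hub hL2 hLn (hub := ⟨L - 1, by omega⟩) rfl x).trans
    (broom_reach_hub hL2 hLn rfl y).symm

end Broom

section BroomAcyclic

variable {n L : ℕ}

lemma broom_del_adj {e : Sym2 (Fin n)} {a b : Fin n}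
    (h : ((broom n L) \ fromEdgeSet {e}).Adj a b) :
    (broom n L).Adj a b ∧ s(a, b) ≠ e := by
  rw [sdiff_adj, fromEdgeSet_adj] at h
  exact ⟨h.1, fun hh => h.2 ⟨by simp [hh], h.1.ne⟩⟩

lemma broom_no_reach_del (hL2 : 2 ≤ L) (hLn : L < n) {u v : Fin n}
    (hrel : (u.val + 1 = v.val ∧ v.val < L) ∨ (u.val = L - 1 ∧ L ≤ v.val)) :
    ¬((broom n L) \ fromEdgeSet {s(u, v)}).Reachable u v := by
  intro hreach
  rcases hrel with ⟨h1, h2⟩ | ⟨h1, h2⟩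
  · -- path edge: use the potential function side
    have hinv := reachable_invariant (P := fun x => fB L x ≤ (u.val : ℤ))
      (fun a b hab => ?_) hreach
    · have hu : fB L u ≤ (u.val : ℤ) := by simp only [fB]; split_ifs <;> omega
      have hv : ¬(fB L v ≤ (u.val : ℤ)) := by simp only [fB]; split_ifs <;> omega
      exact hv (hinv.mp hu)
    obtain ⟨hab', hne⟩ := broom_del_adj hab
    have hsym : s(a, b) ≠ s(u, v) := hne
    rcases broom_adj_cases hab' with ⟨g1, g2⟩ | ⟨g1, g2⟩ | ⟨g1, g2⟩ | ⟨g1, g2⟩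
    · -- a + 1 = b < L
      have hne2 : ¬(a.val = u.val ∧ b.val = v.val) := by
        rintro ⟨e1, e2⟩
        exact hsym (by rw [Fin.val_injective e1, Fin.val_injective e2])
      simp only [fB]
      split_ifs <;> omega
    · have hne2 : ¬(b.val = u.val ∧ a.val = v.val) := by
        rintro ⟨e1, e2⟩
        refine hsym ?_
        rw [Fin.val_injective e1, Fin.val_injective e2, Sym2.eq_swap]
      simp only [fB]
      split_ifs <;> omega
    · simp only [fB]
      split_ifs <;> omega
    · simp only [fB]
      split_ifs <;> omega
  · -- leaf edge: the leaf `v` separates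
    have hinv := reachable_invariant (P := fun x => x = v) (fun a b hab => ?_) hreach
    · have huv : u ≠ v := fun hh => by
        have := congrArg Fin.val hh; omega
      exact huv (hinv.mpr rfl)
    obtain ⟨hab', hne⟩ := broom_del_adj hab
    have hsym : s(a, b) ≠ s(u, v) := hne
    rcases broom_adj_cases hab' with ⟨g1, g2⟩ | ⟨g1, g2⟩ | ⟨g1, g2⟩ | ⟨g1, g2⟩
    · constructor <;> (rintro rfl; omega)
    · constructor <;> (rintro rfl; omega)
    · -- a = hub, b leaf
      constructor
      · rintro rfl; omega
      · rintro rfl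
        refine absurd ?_ hsym
        have : a = u := Fin.val_injective (by omega)
        rw [this]
    · constructor
      · rintro rfl
        refine absurd ?_ hsym
        have : b = u := Fin.val_injective (by omega)
        rw [this, Sym2.eq_swap]
      · rintro rfl; omega

lemma broom_isAcyclic (hL2 : 2 ≤ L) (hLn : L < n) : (broom n L).IsAcyclic := by
  rw [isAcyclic_iff_forall_adj_isBridge]
  intro u v hadj
  rw [isBridge_iff]
  show ¬((broom n L) \ fromEdgeSet {s(u, v)}).Reachable u v
  have h' := hadj
  rw [broom, SimpleGraph.fromRel_adj] at h'
  rcases h'.2 with hrel | hrel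
  · exact broom_no_reach_del hL2 hLn hrel
  · intro hr
    have := broom_no_reach_del hL2 hLn hrel
    rw [Sym2.eq_swap] at hr
    exact this hr.symm

lemma broom_isTree (hL2 : 2 ≤ L) (hLn : L < n) : (broom n L).IsTree :=
  ⟨broom_connected hL2 hLn, broom_isAcyclic hL2 hLn⟩

end BroomAcyclic

section BroomWeight

variable {n L : ℕ}

lemma ncard_Ioi_fin (v : Fin n) : (Set.Ioi v).ncard = n - 1 - v.val := by
  rw [← Nat.card_coe_set_eq, Nat.card_eq_fintype_card, ← Set.toFinset_card, Set.toFinset_Ioi, Fin.card_Ioi]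

lemma ncard_Iio_fin (v : Fin n) : (Set.Iio v).ncard = v.val := by
  rw [← Nat.card_coe_set_eq, Nat.card_eq_fintype_card, ← Set.toFinset_card, Set.toFinset_Iio, Fin.card_Iio]

lemma ncard_ne_fin (v : Fin n) : ({x : Fin n | x ≠ v}).ncard = n - 1 := by
  have h : {x : Fin n | x ≠ v} = Set.univ \ {v} := by ext x; simp
  rw [h, Set.ncard_diff (by simp), Set.ncard_univ, Nat.card_eq_fintype_card,
    Fintype.card_fin, Set.ncard_singleton]

lemma broom_weight_hub_le (hL2 : 2 ≤ L) (hLn : L < n) {hub : Fin n}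
    (hhub : hub.val = L - 1) : weight (broom n L) hub ≤ L - 1 := by
  have h0n : 0 < n := by omega
  have hne : Nonempty {u : Fin n | u ≠ hub} :=
    ⟨⟨⟨0, h0n⟩, fun hh => by have := congrArg Fin.val hh; simp at this; omega⟩⟩
  refine weight_le hne ?_
  intro c
  rw [card_supp_eq_ncard_csupp]
  by_cases hleaf : ∃ x ∈ csupp c, L ≤ x.val
  · obtain ⟨ℓ, hℓmem, hℓ⟩ := hleaf
    have hℓne : ℓ ≠ hub := ne_of_mem_csupp hℓmem
    have hiso : ∀ y, ¬((broom n L).induce {u | u ≠ hub}).Adj ⟨ℓ, hℓne⟩ y := by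
      rintro ⟨y, hy⟩ hadj
      have hadj' : (broom n L).Adj ℓ y := by
        simpa using hadj
      rcases broom_adj_cases hadj' with ⟨g1, g2⟩ | ⟨g1, g2⟩ | ⟨g1, g2⟩ | ⟨g1, g2⟩
      · omega
      · omega
      · omega
      · exact hy (Fin.val_injective (by omega))
    have hsub : csupp c ⊆ {ℓ} := by
      intro x hx
      obtain ⟨hxne, hxeq⟩ := mem_csupp_iff.mp hx
      obtain ⟨hℓne', hℓeq⟩ := mem_csupp_iff.mp hℓmem
      have hreach : ((broom n L).induce {u | u ≠ hub}).Reachable ⟨x, hxne⟩ ⟨ℓ, hℓne'⟩ :=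
        ConnectedComponent.exact (hxeq.trans hℓeq.symm)
      have := eq_of_reachable_isolated hiso hreach
      simp only [Subtype.ext_iff] at this
      exact this
    calc (csupp c).ncard ≤ ({ℓ} : Set (Fin n)).ncard :=
          Set.ncard_le_ncard hsub (Set.toFinite _)
      _ = 1 := Set.ncard_singleton ℓ
      _ ≤ L - 1 := by omega
  · push_neg at hleaf
    have hsub : csupp c ⊆ Set.Iio hub := by
      intro x hx
      have h1 : x.val < L := hleaf x hx
      have h2 : x ≠ hub := ne_of_mem_csupp hx
      have h3 : x.val ≠ L - 1 := fun hh => h2 (Fin.val_injective (by omega))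
      rw [Set.mem_Iio, Fin.lt_def]
      omega
    calc (csupp c).ncard ≤ (Set.Iio hub).ncard := Set.ncard_le_ncard hsub (Set.toFinite _)
      _ = L - 1 := by rw [ncard_Iio_fin, hhub]

lemma broom_weight_path_lb (hL2 : 2 ≤ L) (hLn : L < n) {hub v : Fin n}
    (hhub : hub.val = L - 1) (hv : v.val < L - 1) :
    n - 1 - v.val ≤ weight (broom n L) v := by
  have hhubv : hub ≠ v := fun hh => by have := congrArg Fin.val hh; omega
  set K := SimpleGraph.connectedComponentMk ((broom n L).induce {u | u ≠ v})
    (⟨hub, hhubv⟩ : {u : Fin n | u ≠ v}) with hK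
  have hsub : Set.Ioi v ⊆ csupp K := by
    intro x hx
    rw [Set.mem_Ioi, Fin.lt_def] at hx
    have hxv : x ≠ v := fun hh => by have := congrArg Fin.val hh; omega
    refine mem_csupp_iff.mpr ⟨hxv, ?_⟩
    by_cases hxL : x.val < L
    · have h1 : x.val ≤ hub.val := by omega
      have h2 : hub.val < L := by omega
      obtain ⟨w, -, hsupp⟩ := broom_walk_path (le_of_lt hLn) h1 h2
      have hvn : v ∉ w.support := fun hmem => by have := hsupp v hmem; omega
      exact ConnectedComponent.sound (reachable_avoid w hvn hxv hhubv)
    · have hadj : (broom n L).Adj x hub :=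
        (broom_adj_leaf (i := hub) (j := x) hhub (by omega) hL2).symm
      have hvn : v ∉ (Walk.cons hadj Walk.nil).support := by
        intro hmem
        simp only [Walk.support_cons, Walk.support_nil, List.mem_cons,
          List.mem_singleton] at hmem
        rcases hmem with h1 | h1 | h1
        · exact hxv h1.symm
        · exact hhubv h1.symm
        · simp at h1
      exact ConnectedComponent.sound (reachable_avoid _ hvn hxv hhubv)
  calc n - 1 - v.val = (Set.Ioi v).ncard := (ncard_Ioi_fin v).symm
    _ ≤ (csupp K).ncard := Set.ncard_le_ncard hsub (Set.toFinite _)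
    _ = Nat.card K.supp := (card_supp_eq_ncard_csupp K).symm
    _ ≤ weight (broom n L) v := le_weight K

lemma broom_weight_leaf_lb (hL2 : 2 ≤ L) (hLn : L < n) {hub v : Fin n}
    (hhub : hub.val = L - 1) (hv : L ≤ v.val) :
    n - 1 ≤ weight (broom n L) v := by
  have hhubv : hub ≠ v := fun hh => by have := congrArg Fin.val hh; omega
  set K := SimpleGraph.connectedComponentMk ((broom n L).induce {u | u ≠ v})
    (⟨hub, hhubv⟩ : {u : Fin n | u ≠ v}) with hK
  have hsub : {x : Fin n | x ≠ v} ⊆ csupp K := by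
    intro x hx
    have hxv : x ≠ v := hx
    refine mem_csupp_iff.mpr ⟨hxv, ?_⟩
    by_cases hxL : x.val < L
    · have h1 : x.val ≤ hub.val := by omega
      have h2 : hub.val < L := by omega
      obtain ⟨w, -, hsupp⟩ := broom_walk_path (le_of_lt hLn) h1 h2
      have hvn : v ∉ w.support := fun hmem => by have := hsupp v hmem; omega
      exact ConnectedComponent.sound (reachable_avoid w hvn hxv hhubv)
    · have hadj : (broom n L).Adj x hub :=
        (broom_adj_leaf (i := hub) (j := x) hhub (by omega) hL2).symm
      have hvn : v ∉ (Walk.cons hadj Walk.nil).support := by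
        intro hmem
        simp only [Walk.support_cons, Walk.support_nil, List.mem_cons,
          List.mem_singleton] at hmem
        rcases hmem with h1 | h1 | h1
        · exact hxv h1.symm
        · exact hhubv h1.symm
        · simp at h1
      exact ConnectedComponent.sound (reachable_avoid _ hvn hxv hhubv)
  calc n - 1 = ({x : Fin n | x ≠ v}).ncard := (ncard_ne_fin v).symm
    _ ≤ (csupp K).ncard := Set.ncard_le_ncard hsub (Set.toFinite _)
    _ = Nat.card K.supp := (card_supp_eq_ncard_csupp K).symm
    _ ≤ weight (broom n L) v := le_weight K

lemma broom_centroid_eq_hub (hL2 : 2 ≤ L) (hLn : L < n) (h2L : 2 * L ≤ n + 1)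
    {hub v : Fin n} (hhub : hub.val = L - 1) (hv : v ∈ centroid (broom n L)) :
    v = hub := by
  have h1 : weight (broom n L) v ≤ L - 1 :=
    (hv hub).trans (broom_weight_hub_le hL2 hLn hhub)
  by_contra hne
  by_cases hvL : v.val < L
  · have hval : v.val ≠ L - 1 := fun hh => hne (Fin.val_injective (by omega))
    have hv' : v.val < L - 1 := by omega
    have h2 := broom_weight_path_lb hL2 hLn hhub hv'
    omega
  · have h2 := broom_weight_leaf_lb hL2 hLn hhub (by omega) (v := v)
    omega

end BroomWeight

section BroomCenter

variable {n L : ℕ}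

lemma broom_eccent_mid_le (hL2 : 2 ≤ L) (hLn : L < n) {m : Fin n} (hm : m.val = L / 2) :
    eccent (broom n L) m ≤ L - L / 2 := by
  haveI : Nonempty (Fin n) := ⟨⟨0, by omega⟩⟩
  refine eccent_le ?_
  intro u
  by_cases huL : u.val < L
  · by_cases hum : u.val ≤ m.val
    · obtain ⟨w, hw1, -⟩ := broom_walk_path (le_of_lt hLn) hum (by omega)
      have hd := SimpleGraph.dist_le w
      have hcomm : (broom n L).dist m u = (broom n L).dist u m := SimpleGraph.dist_comm
      omega
    · obtain ⟨w, hw1, -⟩ := broom_walk_path (le_of_lt hLn) (a := m) (b := u) (by omega) huL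
      have hd := SimpleGraph.dist_le w
      omega
  · have hh1 : m.val ≤ (⟨L - 1, by omega⟩ : Fin n).val := by simp; omega
    have hh2 : (⟨L - 1, by omega⟩ : Fin n).val < L := by simp; omega
    obtain ⟨w, hw1, -⟩ := broom_walk_path (le_of_lt hLn) hh1 hh2
    have hadj : (broom n L).Adj ⟨L - 1, by omega⟩ u := broom_adj_leaf rfl (by omega) hL2
    have hd := SimpleGraph.dist_le (w.concat hadj)
    rw [Walk.length_concat] at hd
    simp only at hw1
    omega

lemma broom_center_dist_hub (hL2 : 2 ≤ L) (hLn : L < n) {hub v : Fin n}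
    (hhub : hub.val = L - 1) (hv : v ∈ center (broom n L)) :
    L - 1 ≤ (broom n L).dist v hub + (L - L / 2) := by
  haveI : Nonempty (Fin n) := ⟨⟨0, by omega⟩⟩
  set m : Fin n := ⟨L / 2, by omega⟩ with hm
  have h0 : eccent (broom n L) m ≤ L - L / 2 := broom_eccent_mid_le hL2 hLn rfl
  have hvm : eccent (broom n L) v ≤ L - L / 2 := (hv m).trans h0
  have hconn := broom_connected hL2 hLn
  set z0 : Fin n := ⟨0, by omega⟩ with hz0
  set l0 : Fin n := ⟨L, hLn⟩ with hl0
  have hlip := broom_lip (n := n) hL2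
  have h1 := le_dist_of_lipschitz (fB L) hlip (hconn v z0)
  have h2 := le_dist_of_lipschitz (fB L) hlip (hconn v l0)
  have h3 := le_dist_of_lipschitz (fB L) hlip (hconn v hub)
  have d1 : (broom n L).dist v z0 ≤ L - L / 2 := le_trans dist_le_eccent hvm
  have d2 : (broom n L).dist v l0 ≤ L - L / 2 := le_trans dist_le_eccent hvm
  have e0 : fB L z0 = 0 := by simp only [fB, hz0]; rw [if_pos (by omega : (0:ℕ) < L)]; simp
  have e1 : fB L l0 = (L : ℤ) := by simp [fB, hl0]
  have e2 : fB L hub = ((L : ℤ) - 1) := by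
    simp only [fB, hhub]
    rw [if_pos (by omega)]
    omega
  have hfv : 0 ≤ fB L v ∧ fB L v ≤ (L : ℤ) := by
    simp only [fB]; split_ifs <;> constructor <;> omega
  rw [e0] at h1
  rw [e1] at h2
  rw [e2] at h3
  omega

lemma broom_setDist_lb (hL2 : 2 ≤ L) (hLn : L < n) (h2L : 2 * L ≤ n + 1) :
    L / 2 ≤ setDist (broom n L) (center (broom n L)) (centroid (broom n L)) + 1 := by
  haveI : Nonempty (Fin n) := ⟨⟨0, by omega⟩⟩
  set hub : Fin n := ⟨L - 1, by omega⟩ with hhub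
  obtain ⟨a, ha⟩ := center_nonempty (G := broom n L)
  obtain ⟨b, hb⟩ := centroid_nonempty (G := broom n L)
  have hne : {d | ∃ x ∈ center (broom n L), ∃ y ∈ centroid (broom n L),
      d = (broom n L).dist x y}.Nonempty := ⟨_, a, ha, b, hb, rfl⟩
  have hmem := Nat.sInf_mem hne
  obtain ⟨x, hx, y, hy, heq⟩ := hmem
  have hyhub : y = hub := broom_centroid_eq_hub hL2 hLn h2L rfl hy
  have hfar := broom_center_dist_hub hL2 hLn (v := x) (hub := hub) rfl hx
  rw [setDist]
  rw [heq, hyhub]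
  omega

end BroomCenter

/-! ### Bounds on `deltaCCd` -/

section DeltaBounds

lemma delta_set_bound {n : ℕ} {d : ℕ}
    (hd : d ∈ {d | ∃ G : SimpleGraph (Fin n), G.IsTree ∧
      d = setDist G (center G) (centroid G)}) : d ≤ n := by
  obtain ⟨G, hG, rfl⟩ := hd
  haveI : Nonempty (Fin n) := hG.isConnected.nonempty
  obtain ⟨z, hz⟩ := center_nonempty (G := G)
  obtain ⟨c, hc⟩ := centroid_nonempty (G := G)
  have hne : {d | ∃ a ∈ center G, ∃ b ∈ centroid G, d = G.dist a b}.Nonempty :=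
    ⟨_, z, hz, c, hc, rfl⟩
  have hmem := Nat.sInf_mem hne
  obtain ⟨a, ha, b, hb, heq⟩ := hmem
  obtain ⟨p, hp, hpl⟩ := hG.isConnected.exists_path_of_dist a b
  have hlt := hp.length_lt
  rw [Fintype.card_fin] at hlt
  rw [setDist, heq]
  omega

lemma deltaCCd_lb {n : ℕ} (h8 : 8 ≤ n) : n ≤ 4 * deltaCCd n + 6 := by
  set L := (n + 1) / 2 with hL
  have hL2 : 2 ≤ L := by omega
  have hLn : L < n := by omega
  have h2L : 2 * L ≤ n + 1 := by omega
  have htree := broom_isTree hL2 hLn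
  have hD := broom_setDist_lb hL2 hLn h2L
  have hmem : setDist (broom n L) (center (broom n L)) (centroid (broom n L)) ∈
      {d | ∃ G : SimpleGraph (Fin n), G.IsTree ∧ d = setDist G (center G) (centroid G)} :=
    ⟨broom n L, htree, rfl⟩
  have hbdd : BddAbove {d | ∃ G : SimpleGraph (Fin n), G.IsTree ∧
      d = setDist G (center G) (centroid G)} := ⟨n, fun d hd => delta_set_bound hd⟩
  have hle : setDist (broom n L) (center (broom n L)) (centroid (broom n L)) ≤ deltaCCd n :=
    le_csSup hbdd hmem
  omega

lemma deltaCCd_ub {n : ℕ} (h8 : 8 ≤ n) : 4 * deltaCCd n ≤ n + 2 := by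
  set L := (n + 1) / 2 with hL
  have hL2 : 2 ≤ L := by omega
  have hLn : L < n := by omega
  have htree := broom_isTree hL2 hLn
  have hne : {d | ∃ G : SimpleGraph (Fin n), G.IsTree ∧
      d = setDist G (center G) (centroid G)}.Nonempty :=
    ⟨_, broom n L, htree, rfl⟩
  have hbdd : BddAbove {d | ∃ G : SimpleGraph (Fin n), G.IsTree ∧
      d = setDist G (center G) (centroid G)} := ⟨n, fun d hd => delta_set_bound hd⟩
  have hsup := Nat.sSup_mem hne hbdd
  obtain ⟨G, hG, heq⟩ := hsup
  haveI : Nonempty (Fin n) := hG.isConnected.nonempty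
  obtain ⟨z, hz⟩ := center_nonempty (G := G)
  obtain ⟨c, hc⟩ := centroid_nonempty (G := G)
  have hle : setDist G (center G) (centroid G) ≤ G.dist z c :=
    Nat.sInf_le ⟨z, hz, c, hc, rfl⟩
  have hb := four_dist_le hG hz hc
  rw [Nat.card_eq_fintype_card, Fintype.card_fin] at hb
  rw [deltaCCd, heq]
  omega

end DeltaBounds

/-- `δ_n(C, C_d) / n → 1/4` as `n → ∞`. -/
theorem tendsto_deltaCCd_div :
    Filter.Tendsto (fun n : ℕ => (deltaCCd n : ℝ) / n) Filter.atTop (nhds (1 / 4)) := by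
  have t0 : ∀ c : ℝ, Filter.Tendsto (fun n : ℕ => c / (n : ℝ)) Filter.atTop (nhds 0) :=
    fun c => tendsto_const_div_atTop_nhds_zero_nat c
  have hg : Filter.Tendsto (fun n : ℕ => 1 / 4 - (3 / 2) / (n : ℝ)) Filter.atTop
      (nhds (1 / 4)) := by
    have := (tendsto_const_nhds (x := (1 : ℝ) / 4) (f := Filter.atTop (α := ℕ))).sub (t0 (3 / 2))
    simpa using this
  have hh : Filter.Tendsto (fun n : ℕ => 1 / 4 + (1 / 2) / (n : ℝ)) Filter.atTop
      (nhds (1 / 4)) := by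
    have := (tendsto_const_nhds (x := (1 : ℝ) / 4) (f := Filter.atTop (α := ℕ))).add (t0 (1 / 2))
    simpa using this
  refine tendsto_of_tendsto_of_tendsto_of_le_of_le' hg hh ?_ ?_
  · filter_upwards [Filter.eventually_ge_atTop 8] with n h8
    have hn : (0 : ℝ) < n := by
      have : (8 : ℝ) ≤ n := by exact_mod_cast h8
      linarith
    have hnat := deltaCCd_lb h8
    have hcast : (n : ℝ) ≤ 4 * (deltaCCd n : ℝ) + 6 := by exact_mod_cast hnat
    have heqq : (1 : ℝ) / 4 - (3 / 2) / n = ((n : ℝ) - 6) / (4 * n) := by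
      field_simp
      ring
    rw [heqq, div_le_div_iff₀ (by positivity) hn]
    nlinarith
  · filter_upwards [Filter.eventually_ge_atTop 8] with n h8
    have hn : (0 : ℝ) < n := by
      have : (8 : ℝ) ≤ n := by exact_mod_cast h8
      linarith
    have hnat := deltaCCd_ub h8
    have hcast : 4 * (deltaCCd n : ℝ) ≤ (n : ℝ) + 2 := by exact_mod_cast hnat
    have heqq : (1 : ℝ) / 4 + (1 / 2) / n = ((n : ℝ) + 2) / (4 * n) := by
      field_simp
      ring
    rw [heqq, div_le_div_iff₀ hn (by positivity)]
    nlinarith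

end TreeCenters
end
end

section
/- Let T be a tree and let u, v, w be three distinct vertices of T such that {u,v} and {v,w} are edges of T. Then 2·f_T(v) > f_T(u) + f_T(w). -/
open scoped Classical

noncomputable section

namespace TreeCenters

variable {V : Type*}

lemma mem_of_connected_two_path {T : SimpleGraph V} (hT : T.IsTree) {u v w : V}
    (huv : u ≠ v) (hvw : v ≠ w) (huw : u ≠ w) (h1 : T.Adj u v) (h2 : T.Adj v w)
    {S : Set V} (hS : (T.induce S).Connected) (hu : u ∈ S) (hw : w ∈ S) : v ∈ S := by
  obtain ⟨p⟩ := hS ⟨u, hu⟩ ⟨w, hw⟩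
  let q : T.Walk u w := p.map (SimpleGraph.Embedding.induce S).toHom
  have hsupp : ∀ x ∈ q.support, x ∈ S := by
    intro x hx
    rw [show q.support = _ from SimpleGraph.Walk.support_map _ _] at hx
    obtain ⟨y, _, rfl⟩ := List.mem_map.mp hx
    exact y.2
  let pw : T.Walk u w := .cons h1 (.cons h2 .nil)
  have hpw : pw.IsPath := by
    simp [pw, SimpleGraph.Walk.isPath_def, huv, hvw, huw]
  have huniq := hT.IsAcyclic.path_unique ⟨pw, hpw⟩ q.toPath
  have hv : v ∈ (q.toPath : T.Walk u w).support := by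
    rw [← congrArg Subtype.val huniq]
    simp [pw]
  exact hsupp v (q.support_toPath_subset hv)

lemma insert_connected {T : SimpleGraph V} {u v : V} (h : T.Adj u v) {S : Set V}
    (hS : (T.induce S).Connected) (hu : u ∈ S) :
    (T.induce (insert v S)).Connected := by
  have heq : insert v S = ({u, v} : Set V) ∪ S := by
    ext x
    simp only [Set.mem_insert_iff, Set.mem_union, Set.mem_singleton_iff]
    constructor
    · rintro (rfl | hx)
      · exact Or.inl (Or.inr rfl)
      · exact Or.inr hx
    · rintro ((rfl | rfl) | hx)
      · exact Or.inr hu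
      · exact Or.inl rfl
      · exact Or.inr hx
  rw [heq]
  exact SimpleGraph.induce_union_connected (SimpleGraph.induce_pair_connected_of_adj h).preconnected
    hS.preconnected ⟨u, Or.inl rfl, hu⟩

lemma singleton_connected (T : SimpleGraph V) (v : V) :
    (T.induce ({v} : Set V)).Connected := by
  rw [SimpleGraph.induce_singleton_eq_top]
  exact SimpleGraph.connected_top

/-- The type of subtrees containing `x`. -/
abbrev Sub (T : SimpleGraph V) (x : V) :=
  {S : Finset V // x ∈ S ∧ (T.induce (S : Set V)).Connected}

noncomputable def injFun (T : SimpleGraph V) {u v w : V} (h1 : T.Adj u v) (h2 : T.Adj v w) :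
    (Sub T u ⊕ Sub T w) ⊕ Unit → Sub T v × Bool
  | .inl (.inl ⟨S, hus, hconn⟩) =>
    if hv : v ∈ S then (⟨S, hv, hconn⟩, false)
    else (⟨insert v S, Finset.mem_insert_self v S, by
      rw [Finset.coe_insert]
      exact insert_connected h1 hconn (Finset.mem_coe.mpr hus)⟩, true)
  | .inl (.inr ⟨S, hws, hconn⟩) =>
    if hv : v ∈ S then (⟨S, hv, hconn⟩, true)
    else (⟨insert v S, Finset.mem_insert_self v S, by
      rw [Finset.coe_insert]
      exact insert_connected h2.symm hconn (Finset.mem_coe.mpr hws)⟩, false)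
  | .inr _ => (⟨{v}, Finset.mem_singleton_self v, by
      rw [Finset.coe_singleton]
      exact singleton_connected T v⟩, false)

lemma injFun_injective (T : SimpleGraph V) (hT : T.IsTree) {u v w : V}
    (huv : u ≠ v) (hvw : v ≠ w) (huw : u ≠ w) (h1 : T.Adj u v) (h2 : T.Adj v w) :
    Function.Injective (injFun T h1 h2) := by
  have key : ∀ {S : Finset V}, (T.induce (S : Set V)).Connected → u ∈ S → w ∈ S → v ∈ S :=
    fun hc hu hw => Finset.mem_coe.mp
      (mem_of_connected_two_path hT huv hvw huw h1 h2 hc (Finset.mem_coe.mpr hu)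
        (Finset.mem_coe.mpr hw))
  have erase_inj : ∀ {S₁ S₂ : Finset V}, v ∉ S₁ → v ∉ S₂ →
      insert v S₁ = insert v S₂ → S₁ = S₂ := by
    intro S₁ S₂ hv1 hv2 h
    rw [← Finset.erase_insert hv1, ← Finset.erase_insert hv2, h]
  rintro ((⟨S₁, hu1, hc1⟩ | ⟨S₁, hw1, hc1⟩) | ⟨⟩) ((⟨S₂, hu2, hc2⟩ | ⟨S₂, hw2, hc2⟩) | ⟨⟩) hab <;>
    simp only [injFun] at hab
  · split_ifs at hab with hv1 hv2 hv2 <;>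
      rw [Prod.mk.injEq, Subtype.mk.injEq] at hab
    · obtain ⟨h, -⟩ := hab; subst h; rfl
    · exact Bool.noConfusion hab.2
    · exact Bool.noConfusion hab.2
    · have h := erase_inj hv1 hv2 hab.1; subst h; rfl
  · exfalso
    split_ifs at hab with hv1 hv2 hv2 <;>
      rw [Prod.mk.injEq, Subtype.mk.injEq] at hab
    · exact Bool.noConfusion hab.2
    · -- S₁ = insert v S₂, v ∈ S₁, v ∉ S₂, u ∈ S₁
      have hu2' : u ∈ S₂ := by
        have : u ∈ insert v S₂ := hab.1 ▸ hu1
        exact (Finset.mem_insert.mp this).resolve_left huv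
      exact hv2 (key hc2 hu2' hw2)
    · -- insert v S₁ = S₂, v ∉ S₁, w ∈ S₂
      have hw1' : w ∈ S₁ := by
        have : w ∈ insert v S₁ := hab.1 ▸ hw2
        exact (Finset.mem_insert.mp this).resolve_left (Ne.symm hvw)
      exact hv1 (key hc1 hu1 hw1')
    · exact Bool.noConfusion hab.2
  · exfalso
    split_ifs at hab with hv1 <;>
      rw [Prod.mk.injEq, Subtype.mk.injEq] at hab
    · have : u ∈ ({v} : Finset V) := hab.1 ▸ hu1
      exact huv (Finset.mem_singleton.mp this)
    · exact Bool.noConfusion hab.2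
  · exfalso
    split_ifs at hab with hv1 hv2 hv2 <;>
      rw [Prod.mk.injEq, Subtype.mk.injEq] at hab
    · exact Bool.noConfusion hab.2
    · have hw2' : w ∈ S₂ := by
        have : w ∈ insert v S₂ := hab.1 ▸ hw1
        exact (Finset.mem_insert.mp this).resolve_left (Ne.symm hvw)
      exact hv2 (key hc2 hu2 hw2')
    · have hu1' : u ∈ S₁ := by
        have : u ∈ insert v S₁ := hab.1 ▸ hu2
        exact (Finset.mem_insert.mp this).resolve_left huv
      exact hv1 (key hc1 hu1' hw1)
    · exact Bool.noConfusion hab.2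
  · split_ifs at hab with hv1 hv2 hv2 <;>
      rw [Prod.mk.injEq, Subtype.mk.injEq] at hab
    · obtain ⟨h, -⟩ := hab; subst h; rfl
    · exact Bool.noConfusion hab.2
    · exact Bool.noConfusion hab.2
    · have h := erase_inj hv1 hv2 hab.1; subst h; rfl
  · exfalso
    split_ifs at hab with hv1 <;>
      rw [Prod.mk.injEq, Subtype.mk.injEq] at hab
    · have : w ∈ ({v} : Finset V) := hab.1 ▸ hw1
      exact hvw (Finset.mem_singleton.mp this).symm
    · have : w ∈ ({v} : Finset V) := hab.1 ▸ (Finset.mem_insert_of_mem hw1)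
      exact hvw (Finset.mem_singleton.mp this).symm
  · exfalso
    split_ifs at hab with hv2 <;>
      rw [Prod.mk.injEq, Subtype.mk.injEq] at hab
    · have : u ∈ ({v} : Finset V) := hab.1.symm ▸ hu2
      exact huv (Finset.mem_singleton.mp this)
    · exact Bool.noConfusion hab.2
  · exfalso
    split_ifs at hab with hv2 <;>
      rw [Prod.mk.injEq, Subtype.mk.injEq] at hab
    · have : w ∈ ({v} : Finset V) := hab.1.symm ▸ hw2
      exact hvw (Finset.mem_singleton.mp this).symm
    · have : w ∈ ({v} : Finset V) := hab.1.symm ▸ (Finset.mem_insert_of_mem hw2)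
      exact hvw (Finset.mem_singleton.mp this).symm
  · rfl


/-- If `u, v, w` are distinct vertices of a tree `T` with `{u,v}` and
`{v,w}` edges of `T`, then `2 f_T(v) > f_T(u) + f_T(w)`. -/
theorem subtreeCount_strict_concave {V : Type*} [Fintype V] (T : SimpleGraph V)
    (hT : T.IsTree) (u v w : V) (huv : u ≠ v) (hvw : v ≠ w) (huw : u ≠ w)
    (h1 : T.Adj u v) (h2 : T.Adj v w) :
    subtreeCount T u + subtreeCount T w < 2 * subtreeCount T v := by
  have hle := Nat.card_le_card_of_injective _ (injFun_injective T hT huv hvw huw h1 h2)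
  rw [Nat.card_sum, Nat.card_sum, Nat.card_prod] at hle
  have hB : Nat.card Bool = 2 := by simp [Nat.card_eq_fintype_card]
  have hP : Nat.card Unit = 1 := Nat.card_unique
  have hu' : Nat.card (Sub T u) = subtreeCount T u := rfl
  have hw' : Nat.card (Sub T w) = subtreeCount T w := rfl
  have hv' : Nat.card (Sub T v) = subtreeCount T v := rfl
  rw [hB, hP, hu', hw', hv'] at hle
  omega


end TreeCenters

end
end

section
/- Let T be a tree, let v be a vertex in the subtree core S_c(T), and let y be a pendant vertex of T that is not adjacent to v (and y ≠ v). Let T̃ be the tree obtained from T by deleting y (together with its incident edge) and adding a new pendant vertex adjacent to v. Then S_c(T̃) = {v}. -/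
open scoped Classical

noncomputable section

namespace TreeCenters

variable {V : Type*}

lemma induce_singleton_connected (G : SimpleGraph V) (y : V) :
    (G.induce {y}).Connected := by
  rw [SimpleGraph.connected_iff]
  constructor
  · intro a b
    haveI : Subsingleton ({y} : Set V) := by
      constructor; rintro ⟨a, ha⟩ ⟨b, hb⟩
      simp only [Set.mem_singleton_iff] at ha hb; subst ha; subst hb; rfl
    rw [Subsingleton.elim a b]
  · exact ⟨⟨y, rfl⟩⟩

lemma induce_insert_pendant_connected (G : SimpleGraph V) {s : Set V} {x y : V}
    (hs : (G.induce s).Connected) (hx : x ∈ s) (hadj : G.Adj x y) :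
    (G.induce (insert y s)).Connected := by
  rw [Set.insert_eq, Set.union_comm]
  exact SimpleGraph.connected_induce_union hs.preconnected (induce_singleton_connected G y).preconnected hx rfl hadj

lemma reach_in_erase (G : SimpleGraph V) {s : Set V} {x y : V} (hx : x ∈ s) (hxy : x ≠ y)
    (huniq : ∀ w, G.Adj w y → w = x) :
    ∀ (a b : s) (_ : (G.induce s).Walk a b) (_ : (b : V) = x) (ha : (a : V) ≠ y),
      (G.induce (s \ {y})).Reachable ⟨a, ⟨a.2, ha⟩⟩ ⟨x, ⟨hx, hxy⟩⟩ := by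
  intro a b p
  induction p with
  | nil =>
    rename_i u
    intro hbx ha
    have heq : (⟨(u : V), ⟨u.2, ha⟩⟩ : ↥(s \ {y})) = ⟨x, ⟨hx, hxy⟩⟩ := Subtype.ext hbx
    rw [heq]
  | @cons a' b' c' h' q ih =>
    intro hbx ha
    by_cases hb : (b' : V) = y
    · have hax : (a' : V) = x := huniq _ (by rw [← hb]; exact h')
      have heq : (⟨(a' : V), ⟨a'.2, ha⟩⟩ : ↥(s \ {y})) = ⟨x, ⟨hx, hxy⟩⟩ := Subtype.ext hax
      rw [heq]
    · have hr := ih hbx hb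
      have hadj2 : (G.induce (s \ {y})).Adj ⟨a', ⟨a'.2, ha⟩⟩ ⟨b', ⟨b'.2, hb⟩⟩ := h'
      exact (hadj2.reachable).trans hr

lemma induce_erase_pendant_connected (G : SimpleGraph V) {s : Set V} {x y : V}
    (hs : (G.induce s).Connected) (hx : x ∈ s) (hxy : x ≠ y)
    (huniq : ∀ w, G.Adj w y → w = x) :
    (G.induce (s \ {y})).Connected := by
  rw [SimpleGraph.connected_iff]
  refine ⟨fun a b => ?_, ⟨⟨x, hx, hxy⟩⟩⟩
  obtain ⟨a, ha⟩ := a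
  obtain ⟨b, hb⟩ := b
  have ra := reach_in_erase G hx hxy huniq ⟨a, ha.1⟩ ⟨x, hx⟩
    (hs.preconnected _ _).some rfl ha.2
  have rb := reach_in_erase G hx hxy huniq ⟨b, hb.1⟩ ⟨x, hx⟩
    (hs.preconnected _ _).some rfl hb.2
  exact ra.trans rb.symm



variable [Fintype V]

lemma subtreeCount_eq_filter (G : SimpleGraph V) (u : V) :
    subtreeCount G u =
      (Finset.univ.filter fun S : Finset V =>
        u ∈ S ∧ (G.induce (S : Set V)).Connected).card := by
  rw [subtreeCount, Nat.card_eq_fintype_card, Fintype.card_subtype]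

def cnt1 (G : SimpleGraph V) (y u : V) : ℕ :=
  (Finset.univ.filter fun S : Finset V =>
    y ∉ S ∧ u ∈ S ∧ (G.induce (S : Set V)).Connected).card

def cnt2 (G : SimpleGraph V) (y u w : V) : ℕ :=
  (Finset.univ.filter fun S : Finset V =>
    y ∉ S ∧ u ∈ S ∧ w ∈ S ∧ (G.induce (S : Set V)).Connected).card

lemma cnt2_comm (G : SimpleGraph V) (y u w : V) : cnt2 G y u w = cnt2 G y w u := by
  unfold cnt2; congr 1; apply Finset.filter_congr; intro S _; tauto

lemma cnt2_self (G : SimpleGraph V) (y u : V) : cnt2 G y u u = cnt1 G y u := by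
  unfold cnt2 cnt1; congr 1; apply Finset.filter_congr; intro S _; tauto


lemma mem_of_pendant (G : SimpleGraph V) {S : Finset V}
    (hc : (G.induce (S : Set V)).Connected) {x y u : V}
    (huniq : ∀ w, G.Adj w y → w = x) (hyS : y ∈ S) (huS : u ∈ S) (huy : u ≠ y) :
    x ∈ S := by
  obtain ⟨p⟩ := hc.preconnected ⟨y, hyS⟩ ⟨u, huS⟩
  have hnn : ¬ p.Nil := by
    apply SimpleGraph.Walk.not_nil_of_ne
    intro h
    exact huy (congrArg Subtype.val h).symm
  have h2 := p.adj_snd hnn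
  have h3 : G.Adj y ((p.getVert 1) : V) := h2
  have := huniq _ h3.symm
  rw [← this]
  exact (p.getVert 1).2
lemma subtreeCount_pendant (G : SimpleGraph V) [Fintype V] {x y : V} (hadj : G.Adj x y)
    (huniq : ∀ w, G.Adj w y → w = x) {u : V} (hu : u ≠ y) :
    subtreeCount G u = cnt1 G y u + cnt2 G y u x := by
  rw [subtreeCount_eq_filter]
  set F := Finset.univ.filter fun S : Finset V =>
    u ∈ S ∧ (G.induce (S : Set V)).Connected with hF
  rw [← Finset.card_filter_add_card_filter_not (s := F) (p := fun S => y ∈ S),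
    Nat.add_comm (cnt1 G y u)]
  congr 1
  · -- sets containing y ↔ cnt2
    apply Finset.card_bij (fun S _ => S.erase y)
    · intro a ha
      simp only [hF, Finset.mem_filter, Finset.mem_univ, true_and] at ha ⊢
      obtain ⟨⟨hua, hconn⟩, hya⟩ := ha
      have hxa : x ∈ a := mem_of_pendant G hconn huniq hya hua hu
      refine ⟨Finset.notMem_erase y a, Finset.mem_erase_of_ne_of_mem hu hua,
        Finset.mem_erase_of_ne_of_mem hadj.ne hxa, ?_⟩
      have := induce_erase_pendant_connected G (s := (a : Set V)) hconn hxa hadj.ne huniq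
      rwa [Finset.coe_erase]
    · intro a ha b hb h
      simp only [hF, Finset.mem_filter] at ha hb
      rw [← Finset.insert_erase ha.2, ← Finset.insert_erase hb.2, h]
    · intro b hb
      simp only [hF, Finset.mem_filter, Finset.mem_univ, true_and] at hb
      obtain ⟨hyb, hub, hxb, hconn⟩ := hb
      refine ⟨insert y b, ?_, Finset.erase_insert hyb⟩
      simp only [hF, Finset.mem_filter, Finset.mem_univ, true_and]
      refine ⟨⟨Finset.mem_insert_of_mem hub, ?_⟩, Finset.mem_insert_self y b⟩
      have := induce_insert_pendant_connected G (s := (b : Set V)) hconn hxb hadj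
      rwa [Finset.coe_insert]
  · -- sets not containing y ↔ cnt1
    unfold cnt1
    rw [hF, Finset.filter_filter]
    congr 1
    apply Finset.filter_congr
    intro S _
    tauto
set_option linter.unusedSectionVars false

lemma subtreeCount_pendant_self (G : SimpleGraph V) [Fintype V] {x y : V} (hadj : G.Adj x y)
    (huniq : ∀ w, G.Adj w y → w = x) :
    subtreeCount G y = 1 + cnt1 G y x := by
  rw [subtreeCount_eq_filter]
  set F := Finset.univ.filter fun S : Finset V =>
    y ∈ S ∧ (G.induce (S : Set V)).Connected with hF
  rw [← Finset.card_filter_add_card_filter_not (s := F) (p := fun S => S = {y})]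
  congr 1
  · -- exactly {y}
    have : F.filter (fun S => S = {y}) = {({y} : Finset V)} := by
      ext S
      simp only [hF, Finset.mem_filter, Finset.mem_univ, true_and, Finset.mem_singleton]
      constructor
      · rintro ⟨-, h⟩; exact h
      · rintro rfl
        refine ⟨⟨Finset.mem_singleton_self y, ?_⟩, rfl⟩
        rw [Finset.coe_singleton]
        exact induce_singleton_connected G y
    rw [this, Finset.card_singleton]
  · -- the rest, via erase bijection
    unfold cnt1
    apply Finset.card_bij (fun S _ => S.erase y)
    · intro a ha
      simp only [hF, Finset.mem_filter, Finset.mem_univ, true_and] at ha ⊢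
      obtain ⟨⟨hya, hconn⟩, hne⟩ := ha
      obtain ⟨u, hua, huy⟩ : ∃ u ∈ a, u ≠ y := by
        by_contra h
        push_neg at h
        exact hne (Finset.eq_singleton_iff_unique_mem.2 ⟨hya, h⟩)
      have hxa : x ∈ a := mem_of_pendant G hconn huniq hya hua huy
      refine ⟨Finset.notMem_erase y a, Finset.mem_erase_of_ne_of_mem hadj.ne hxa, ?_⟩
      have := induce_erase_pendant_connected G (s := (a : Set V)) hconn hxa hadj.ne huniq
      rwa [Finset.coe_erase]
    · intro a ha b hb h
      simp only [hF, Finset.mem_filter, Finset.mem_univ, true_and] at ha hb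
      rw [← Finset.insert_erase ha.1.1, ← Finset.insert_erase hb.1.1, h]
    · intro b hb
      simp only [hF, Finset.mem_filter, Finset.mem_univ, true_and] at hb
      obtain ⟨hyb, hxb, hconn⟩ := hb
      refine ⟨insert y b, ?_, Finset.erase_insert hyb⟩
      simp only [hF, Finset.mem_filter, Finset.mem_univ, true_and]
      refine ⟨⟨Finset.mem_insert_self y b, ?_⟩, ?_⟩
      · have := induce_insert_pendant_connected G (s := (b : Set V)) hconn hxb hadj
        rwa [Finset.coe_insert]
      · intro h
        have : x ∈ ({y} : Finset V) := h ▸ Finset.mem_insert_of_mem hxb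
        exact hadj.ne (Finset.mem_singleton.1 this)
lemma induce_congr {G G' : SimpleGraph V} {s : Set V}
    (h : ∀ a ∈ s, ∀ b ∈ s, G.Adj a b ↔ G'.Adj a b) : G.induce s = G'.induce s := by
  ext ⟨a, ha⟩ ⟨b, hb⟩
  exact h a ha b hb

lemma cnt1_congr (G G' : SimpleGraph V) [Fintype V] (y : V)
    (h : ∀ a b, a ≠ y → b ≠ y → (G.Adj a b ↔ G'.Adj a b)) (u : V) :
    cnt1 G y u = cnt1 G' y u := by
  unfold cnt1
  congr 1
  apply Finset.filter_congr
  intro S _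
  by_cases hy : y ∈ S
  · tauto
  · have : G.induce (S : Set V) = G'.induce (S : Set V) :=
      induce_congr fun a ha b hb => h a b (fun e => hy (e ▸ ha)) (fun e => hy (e ▸ hb))
    rw [this]

lemma cnt2_congr (G G' : SimpleGraph V) [Fintype V] (y : V)
    (h : ∀ a b, a ≠ y → b ≠ y → (G.Adj a b ↔ G'.Adj a b)) (u w : V) :
    cnt2 G y u w = cnt2 G' y u w := by
  unfold cnt2
  congr 1
  apply Finset.filter_congr
  intro S _
  by_cases hy : y ∈ S
  · tauto
  · have : G.induce (S : Set V) = G'.induce (S : Set V) :=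
      induce_congr fun a ha b hb => h a b (fun e => hy (e ▸ ha)) (fun e => hy (e ▸ hb))
    rw [this]

lemma cnt1_split (G : SimpleGraph V) [Fintype V] (y v u : V) :
    cnt1 G y v = cnt2 G y v u +
      (Finset.univ.filter fun S : Finset V =>
        y ∉ S ∧ v ∈ S ∧ u ∉ S ∧ (G.induce (S : Set V)).Connected).card := by
  unfold cnt1 cnt2
  rw [← Finset.card_filter_add_card_filter_not
    (s := Finset.univ.filter fun S : Finset V =>
      y ∉ S ∧ v ∈ S ∧ (G.induce (S : Set V)).Connected) (p := fun S => u ∈ S),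
    Finset.filter_filter, Finset.filter_filter]
  congr 1
  · congr 1; apply Finset.filter_congr; intro S _; tauto
  · congr 1; apply Finset.filter_congr; intro S _; tauto

lemma cnt2_le_split (G : SimpleGraph V) [Fintype V] (y v x u : V) :
    cnt2 G y v x ≤
      (Finset.univ.filter fun S : Finset V =>
        y ∉ S ∧ v ∈ S ∧ x ∈ S ∧ u ∉ S ∧ (G.induce (S : Set V)).Connected).card +
      cnt2 G y u x := by
  unfold cnt2
  rw [← Finset.card_filter_add_card_filter_not
    (s := Finset.univ.filter fun S : Finset V =>
      y ∉ S ∧ v ∈ S ∧ x ∈ S ∧ (G.induce (S : Set V)).Connected) (p := fun S => u ∈ S),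
    Finset.filter_filter, Finset.filter_filter, Nat.add_comm]
  apply Nat.add_le_add
  · apply Finset.card_le_card
    apply Finset.monotone_filter_right
    intro S; tauto
  · apply Finset.card_le_card
    apply Finset.monotone_filter_right
    intro S; tauto

lemma cnt_strict (G : SimpleGraph V) [Fintype V] {y v x u : V}
    (hxv : x ≠ v) (huv : u ≠ v) (hyv : y ≠ v) :
    (Finset.univ.filter fun S : Finset V =>
        y ∉ S ∧ v ∈ S ∧ x ∈ S ∧ u ∉ S ∧ (G.induce (S : Set V)).Connected).card <
      (Finset.univ.filter fun S : Finset V =>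
        y ∉ S ∧ v ∈ S ∧ u ∉ S ∧ (G.induce (S : Set V)).Connected).card := by
  apply Finset.card_lt_card
  have hsub : (Finset.univ.filter fun S : Finset V =>
        y ∉ S ∧ v ∈ S ∧ x ∈ S ∧ u ∉ S ∧ (G.induce (S : Set V)).Connected) ⊆
      (Finset.univ.filter fun S : Finset V =>
        y ∉ S ∧ v ∈ S ∧ u ∉ S ∧ (G.induce (S : Set V)).Connected) := by
    apply Finset.monotone_filter_right
    intro S; tauto
  rw [Finset.ssubset_iff_of_subset hsub]
  refine ⟨{v}, ?_, ?_⟩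
  · simp only [Finset.mem_filter, Finset.mem_univ, true_and, Finset.mem_singleton]
    refine ⟨fun h => hyv h, fun h => huv h, ?_⟩
    rw [Finset.coe_singleton]
    exact induce_singleton_connected G v
  · simp only [Finset.mem_filter, Finset.mem_univ, true_and, Finset.mem_singleton]
    intro h
    exact hxv h.2.1

lemma two_le_cnt1 (G : SimpleGraph V) [Fintype V] {y v w : V}
    (hw : G.Adj v w) (hwy : w ≠ y) (hvy : v ≠ y) :
    2 ≤ cnt1 G y v := by
  unfold cnt1
  have hsub : ({({v} : Finset V), ({v, w} : Finset V)} : Finset (Finset V)) ⊆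
      Finset.univ.filter fun S : Finset V =>
        y ∉ S ∧ v ∈ S ∧ (G.induce (S : Set V)).Connected := by
    intro S hS
    simp only [Finset.mem_insert, Finset.mem_singleton] at hS
    simp only [Finset.mem_filter, Finset.mem_univ, true_and]
    rcases hS with rfl | rfl
    · refine ⟨by simp [Ne.symm hvy], Finset.mem_singleton_self v, ?_⟩
      rw [Finset.coe_singleton]; exact induce_singleton_connected G v
    · refine ⟨by simp [Ne.symm hvy, Ne.symm hwy], Finset.mem_insert_self v _, ?_⟩
      rw [Finset.coe_insert, Finset.coe_singleton]
      exact SimpleGraph.induce_pair_connected_of_adj hw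
  have h2 : ({({v} : Finset V), ({v, w} : Finset V)} : Finset (Finset V)).card = 2 := by
    rw [Finset.card_pair]
    intro h
    have : w ∈ ({v} : Finset V) := h ▸ Finset.mem_insert_of_mem (Finset.mem_singleton_self w)
    exact hw.ne' (Finset.mem_singleton.1 this)
  calc 2 = _ := h2.symm
    _ ≤ _ := Finset.card_le_card hsub

/-- Let `v` be in the subtree core of a tree `T` and let `y` be a
pendant vertex of `T` neither equal nor adjacent to `v`. If `T'` is obtained from
`T` by deleting `y` (with its incident edge) and adding a new pendant vertex
adjacent to `v` (here the same vertex `y` is reused as the new pendant), then the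
subtree core of `T'` is `{v}`. -/
theorem subtreeCore_move_pendant {V : Type*} [Fintype V] (T : SimpleGraph V)
    (hT : T.IsTree) (v y : V) (hv : v ∈ subtreeCore T)
    (hy : Nat.card (T.neighborSet y) = 1) (hadj : ¬ T.Adj v y) (hne : y ≠ v) :
    subtreeCore (SimpleGraph.fromRel fun a b =>
      (T.Adj a b ∧ a ≠ y ∧ b ≠ y) ∨ (a = v ∧ b = y)) = {v} := by
  set T' : SimpleGraph V := SimpleGraph.fromRel fun a b =>
    (T.Adj a b ∧ a ≠ y ∧ b ≠ y) ∨ (a = v ∧ b = y) with hT'def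
  -- the unique neighbor x of y in T
  have h1 : (T.neighborSet y).ncard = 1 := by
    rw [← Nat.card_coe_set_eq]; exact hy
  obtain ⟨x, hx⟩ := Set.ncard_eq_one.1 h1
  have hadjyx : T.Adj y x := by
    have : x ∈ T.neighborSet y := hx ▸ Set.mem_singleton x
    exact this
  have huniqT : ∀ w, T.Adj w y → w = x := by
    intro w hw
    have : w ∈ T.neighborSet y := hw.symm
    rw [hx] at this; exact this
  have hxy : x ≠ y := hadjyx.ne'
  have hxv : x ≠ v := fun h => hadj (h ▸ hadjyx.symm)
  -- T and T' agree away from y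
  have hagree : ∀ a b, a ≠ y → b ≠ y → (T'.Adj a b ↔ T.Adj a b) := by
    intro a b ha hb
    rw [hT'def, SimpleGraph.fromRel_adj]
    constructor
    · rintro ⟨hne', (⟨h, -⟩ | ⟨-, h⟩) | (⟨h, -⟩ | ⟨-, h⟩)⟩
      · exact h
      · exact absurd h hb
      · exact h.symm
      · exact absurd h ha
    · intro h
      exact ⟨h.ne, Or.inl (Or.inl ⟨h, ha, hb⟩)⟩
  -- pendant structure of y in T'
  have hT'vy : T'.Adj v y := by
    rw [hT'def, SimpleGraph.fromRel_adj]
    exact ⟨hne.symm, Or.inl (Or.inr ⟨rfl, rfl⟩)⟩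
  have huniqT' : ∀ w, T'.Adj w y → w = v := by
    intro w hw
    rw [hT'def, SimpleGraph.fromRel_adj] at hw
    rcases hw with ⟨hwne, (⟨-, -, h⟩ | ⟨h, -⟩) | (⟨-, h, -⟩ | ⟨h, h'⟩)⟩
    · exact absurd rfl h
    · exact h
    · exact absurd rfl h
    · exact absurd h hne
  -- a neighbor of v in T distinct from y
  obtain ⟨p⟩ := hT.isConnected.preconnected v y
  have hpnil : ¬ p.Nil := SimpleGraph.Walk.not_nil_of_ne hne.symm
  have hvw : T.Adj v (p.getVert 1) := p.adj_snd hpnil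
  set w := p.getVert 1 with hwdef
  have hwy : w ≠ y := fun h => hadj (h ▸ hvw)
  have h2av : 2 ≤ cnt1 T y v := two_le_cnt1 T hvw hwy hne.symm
  -- count formulas
  have hcnt1 := cnt1_congr T' T y (fun a b ha hb => hagree a b ha hb)
  have hcnt2 := cnt2_congr T' T y (fun a b ha hb => hagree a b ha hb)
  have hT'count : ∀ u : V, u ≠ y →
      subtreeCount T' u = cnt1 T y u + cnt2 T y u v := by
    intro u hu
    rw [subtreeCount_pendant T' hT'vy huniqT' hu, hcnt1, hcnt2]
  have hT'y : subtreeCount T' y = 1 + cnt1 T y v := by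
    rw [subtreeCount_pendant_self T' hT'vy huniqT', hcnt1]
  have hT'v : subtreeCount T' v = cnt1 T y v + cnt1 T y v := by
    rw [hT'count v hne.symm, cnt2_self]
  -- the key strict inequality
  have key : ∀ u : V, u ≠ v → subtreeCount T' u < subtreeCount T' v := by
    intro u huv
    by_cases huy : u = y
    · subst huy
      rw [hT'y, hT'v]
      omega
    · have E1 := hv u
      rw [subtreeCount_pendant T hadjyx.symm huniqT huy,
        subtreeCount_pendant T hadjyx.symm huniqT hne.symm] at E1
      have E2 := cnt2_le_split T y v x u
      have E3 := cnt_strict T (u := u) (v := v) (x := x) (y := y) hxv huv hne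
      have E4 := cnt1_split T y v u
      have E5 := cnt2_comm T y u v
      rw [hT'count u huy, hT'v]
      omega
  rw [Set.eq_singleton_iff_unique_mem]
  constructor
  · intro u
    by_cases huv : u = v
    · subst huv; exact le_refl _
    · exact (key u huv).le
  · intro u hu
    by_contra huv
    exact absurd (hu v) (not_le.2 (key u huv))


end TreeCenters

end
end
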